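/- arXiv:1509.03758 — 3 statements merged into one kernel-verified Lean document; each statement's English description precedes it below -/
import Mathlib

section
/- The numbers D(n,k) satisfy the self-contained recurrence: D(n,0) = 1, D(n,n) = (1 + (−1)^n)/2, and for 0 < k < n (as an identity of integers), D(n,k) = (2k+1)·D(n−1,k) + (2n−2k+1)·D(n−1,k−1) + (−1)^k·C(n−1,k−1), where C denotes the binomial coefficient. -/
open MeasureTheory Finset

/-- Number of descents of a finite sequence given as a list. -/
def descCount {α : Type*} [LT α] [DecidableRel ((· < ·) : α → α → Prop)] : List α → ℕ
  | a :: b :: rest => (if b < a then 1 else 0) + descCount (b :: rest)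
  | _ => 0

/-- Type A Eulerian number: permutations of {1,…,n} with k descents. -/
def eulerianA (n k : ℕ) : ℕ :=
  Fintype.card {σ : Equiv.Perm (Fin n) // descCount (List.ofFn fun i => σ i) = k}

/-- Eulerian polynomial of type A. -/
noncomputable def polyA (n : ℕ) (t : ℝ) : ℝ :=
  ∑ k ∈ Finset.range (n + 1), (eulerianA n k : ℝ) * t ^ k

/-- The underlying set {-n, …, -1, 0, 1, …, n}. -/
abbrev BSet (n : ℕ) : Type := {x : ℤ // x ∈ Finset.Icc (-(n : ℤ)) (n : ℤ)}

def negB {n : ℕ} (x : BSet n) : BSet n :=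
  ⟨-x.1, by have := x.2; simp only [Finset.mem_Icc] at *; omega⟩

def posB {n : ℕ} (i : Fin n) : BSet n :=
  ⟨((i : ℕ) : ℤ) + 1, by have := i.isLt; simp only [Finset.mem_Icc]; omega⟩

/-- A permutation of {-n,…,n} is a signed permutation if σ(-k) = -σ(k). -/
def IsSigned {n : ℕ} (σ : Equiv.Perm (BSet n)) : Prop :=
  ∀ x : BSet n, (σ (negB x)).1 = -((σ x).1)

noncomputable instance {n : ℕ} (σ : Equiv.Perm (BSet n)) : Decidable (IsSigned σ) :=
  inferInstanceAs (Decidable (∀ x : BSet n, (σ (negB x)).1 = -((σ x).1)))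

/-- Number of descents of the sequence (0, σ(1), …, σ(n)). -/
def descB {n : ℕ} (σ : Equiv.Perm (BSet n)) : ℕ :=
  descCount ((0 : ℤ) :: List.ofFn fun i : Fin n => (σ (posB i)).1)

/-- Number of negative terms among σ(1), …, σ(n). -/
def negCount {n : ℕ} (σ : Equiv.Perm (BSet n)) : ℕ :=
  (Finset.univ.filter fun i : Fin n => (σ (posB i)).1 < 0).card

/-- Type B Eulerian number. -/
noncomputable def eulerianB (n k : ℕ) : ℕ :=
  Fintype.card {σ : Equiv.Perm (BSet n) // IsSigned σ ∧ descB σ = k}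

/-- Primary type D Eulerian number. -/
noncomputable def eulerianD (n k : ℕ) : ℕ :=
  Fintype.card {σ : Equiv.Perm (BSet n) //
    (IsSigned σ ∧ Even (negCount σ)) ∧ descB σ = k}

/-- Complementary type D Eulerian number. -/
noncomputable def eulerianDt (n k : ℕ) : ℕ :=
  Fintype.card {σ : Equiv.Perm (BSet n) //
    (IsSigned σ ∧ ¬ Even (negCount σ)) ∧ descB σ = k}

noncomputable def polyB (n : ℕ) (t : ℝ) : ℝ :=
  ∑ k ∈ Finset.range (n + 1), (eulerianB n k : ℝ) * t ^ k

noncomputable def polyD (n : ℕ) (t : ℝ) : ℝ :=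
  ∑ k ∈ Finset.range (n + 1), (eulerianD n k : ℝ) * t ^ k

noncomputable def polyDt (n : ℕ) (t : ℝ) : ℝ :=
  ∑ k ∈ Finset.range (n + 1), (eulerianDt n k : ℝ) * t ^ k

namespace Aux10

def desL (l : List ℤ) : ℕ := descCount ((0 : ℤ) :: l)
def negL (l : List ℤ) : ℕ := l.countP (fun x => decide (x < 0))



theorem descCount_cons (c b : ℤ) (t : List ℤ) :
    descCount (c :: b :: t) = (if b < c then 1 else 0) + descCount (b :: t) := rfl

theorem descCount_eq_sum (c : ℤ) (l : List ℤ) :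
    descCount (c :: l) =
      ∑ i ∈ range l.length, (if l.getD i 0 < (c :: l).getD i 0 then 1 else 0) := by
  induction l generalizing c with
  | nil => simp [descCount]
  | cons b t ih =>
    rw [descCount_cons, ih b]
    rw [List.length_cons, Finset.sum_range_succ']
    simp [List.getD_cons_succ, List.getD_cons_zero, add_comm]

theorem desc_insert_interior (x : ℤ) : ∀ (i : ℕ) (l : List ℤ) (c : ℤ), i < l.length →
    ((∀ y ∈ c :: l, y < x) ∨ (∀ y ∈ c :: l, x < y)) →
    descCount (c :: l.insertIdx i x) + (if l.getD i 0 < (c :: l).getD i 0 then 1 else 0)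
      = descCount (c :: l) + 1 := by
  intro i
  induction i with
  | zero =>
    rintro (_ | ⟨b, t⟩) c hi hx
    · simp at hi
    · rw [List.insertIdx_zero]
      rw [descCount_cons, descCount_cons (c := x), descCount_cons (c := c)]
      simp only [List.getD_cons_zero]
      rcases hx with hx | hx
      · have h1 : ¬ (x < c) := by have := hx c (by simp); omega
        have h2 : b < x := hx b (by simp)
        simp [h1, h2]; omega
      · have h1 : x < c := hx c (by simp)
        have h2 : ¬ (b < x) := by have := hx b (by simp); omega
        simp [h1, h2]; omega
  | succ i ih =>
    rintro (_ | ⟨b, t⟩) c hi hx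
    · simp at hi
    · rw [List.insertIdx_succ_cons]
      rw [descCount_cons, descCount_cons (c := c)]
      simp only [List.getD_cons_succ]
      have := ih t b (by simpa using hi) (by
        rcases hx with hx | hx
        · exact Or.inl fun y hy => hx y (by simp at hy ⊢; tauto)
        · exact Or.inr fun y hy => hx y (by simp at hy ⊢; tauto))
      omega

theorem desc_insert_end_big (x : ℤ) : ∀ (l : List ℤ) (c : ℤ), (∀ y ∈ c :: l, y < x) →
    descCount (c :: l.insertIdx l.length x) = descCount (c :: l) := by
  intro l
  induction l with
  | nil =>
    intro c hx
    have : ¬ (x < c) := by have := hx c (by simp); omega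
    simp [descCount, this]
  | cons b t ih =>
    intro c hx
    rw [show (b :: t).length = t.length + 1 from rfl, List.insertIdx_succ_cons,
      descCount_cons, descCount_cons (c := c), ih b (fun y hy => hx y (by simp at hy ⊢; tauto))]

theorem desc_insert_end_small (x : ℤ) : ∀ (l : List ℤ) (c : ℤ), (∀ y ∈ c :: l, x < y) →
    descCount (c :: l.insertIdx l.length x) = descCount (c :: l) + 1 := by
  intro l
  induction l with
  | nil =>
    intro c hx
    have : x < c := hx c (by simp)
    simp [descCount, this]
  | cons b t ih =>
    intro c hx
    rw [show (b :: t).length = t.length + 1 from rfl, List.insertIdx_succ_cons,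
      descCount_cons, descCount_cons (c := c), ih b (fun y hy => hx y (by simp at hy ⊢; tauto))]
    omega


/-- number of "descent slots" equals desL -/
theorem card_DS (l : List ℤ) :
    ((range l.length).filter fun i => l.getD i 0 < ((0:ℤ) :: l).getD i 0).card = desL l := by
  rw [Finset.card_filter, desL, descCount_eq_sum]

theorem count_insert_generic (l : List ℤ) (x : ℤ) (K : ℕ)
    (hx : (∀ y ∈ (0:ℤ) :: l, y < x) ∨ (∀ y ∈ (0:ℤ) :: l, x < y))
    (e : ℕ) (hend : desL (l.insertIdx l.length x) = desL l + e) :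
    ((range (l.length + 1)).filter fun i => desL (l.insertIdx i x) = K).card
      = (if K = desL l + e then 1 else 0)
        + (if K = desL l then desL l else 0)
        + (if K = desL l + 1 then l.length - desL l else 0) := by
  have hint : ∀ i < l.length,
      desL (l.insertIdx i x) + (if l.getD i 0 < ((0:ℤ) :: l).getD i 0 then 1 else 0)
        = desL l + 1 := fun i hi => desc_insert_interior x i l 0 hi hx
  have hDS := card_DS l
  have hDSc : ((range l.length).filter fun i => ¬ (l.getD i 0 < ((0:ℤ) :: l).getD i 0)).card
      = l.length - desL l := by
    have := Finset.card_filter_add_card_filter_not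
      (s := range l.length) (p := fun i => l.getD i 0 < ((0:ℤ) :: l).getD i 0)
    simp only [card_range] at this
    omega
  rw [Finset.range_add_one, Finset.filter_insert]
  by_cases h1 : K = desL l
  · subst h1
    have hfil : ((range l.length).filter fun i => desL (l.insertIdx i x) = desL l)
        = (range l.length).filter fun i => l.getD i 0 < ((0:ℤ) :: l).getD i 0 := by
      apply Finset.filter_congr
      intro i hi
      simp only [mem_range] at hi
      have h := hint i hi
      constructor
      · intro hK
        by_contra hds
        rw [if_neg hds] at h
        omega
      · intro hds
        rw [if_pos hds] at h
        omega
    by_cases he : desL (l.insertIdx l.length x) = desL l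
    · rw [if_pos he, Finset.card_insert_of_notMem (by simp), hfil, hDS]
      split_ifs <;> omega
    · rw [if_neg he, hfil, hDS]
      split_ifs <;> omega
  · by_cases h2 : K = desL l + 1
    · subst h2
      have hfil : ((range l.length).filter fun i => desL (l.insertIdx i x) = desL l + 1)
          = (range l.length).filter fun i => ¬ (l.getD i 0 < ((0:ℤ) :: l).getD i 0) := by
        apply Finset.filter_congr
        intro i hi
        simp only [mem_range] at hi
        have h := hint i hi
        constructor
        · intro hK
          intro hds
          rw [if_pos hds] at h
          omega
        · intro hds
          rw [if_neg hds] at h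
          omega
      by_cases he : desL (l.insertIdx l.length x) = desL l + 1
      · rw [if_pos he, Finset.card_insert_of_notMem (by simp), hfil, hDSc]
        split_ifs <;> omega
      · rw [if_neg he, hfil, hDSc]
        split_ifs <;> omega
    · have hfil : ((range l.length).filter fun i => desL (l.insertIdx i x) = K) = ∅ := by
        apply Finset.filter_false_of_mem
        intro i hi
        simp only [mem_range] at hi
        have h := hint i hi
        intro hK
        by_cases hds : l.getD i 0 < ((0:ℤ) :: l).getD i 0
        · rw [if_pos hds] at h; omega
        · rw [if_neg hds] at h; omega
      by_cases he : desL (l.insertIdx l.length x) = K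
      · rw [if_pos he, hfil, Finset.card_insert_of_notMem (by simp), Finset.card_empty]
        split_ifs <;> omega
      · rw [if_neg he, hfil, Finset.card_empty]
        split_ifs <;> omega


def win {n : ℕ} (σ : Equiv.Perm (BSet n)) : List ℤ :=
  List.ofFn fun i : Fin n => (σ (posB i)).1

noncomputable def SW (n : ℕ) : Finset (List ℤ) :=
  (Finset.univ.filter fun σ : Equiv.Perm (BSet n) => IsSigned σ).image win

def OKL (n : ℕ) (l : List ℤ) : Prop :=
  l.length = n ∧ (∀ x ∈ l, x ≠ 0 ∧ |x| ≤ (n : ℤ)) ∧ (l.map (fun x => |x|)).Nodup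

def zeroB (n : ℕ) : BSet n := ⟨0, by simp⟩

theorem signed_zero {n : ℕ} {σ : Equiv.Perm (BSet n)} (h : IsSigned σ) :
    (σ (zeroB n)).1 = 0 := by
  have h0 : negB (zeroB n) = zeroB n := Subtype.ext (by simp [negB, zeroB])
  have := h (zeroB n)
  rw [h0] at this
  omega

theorem negB_negB {n : ℕ} (x : BSet n) : negB (negB x) = x := Subtype.ext (by simp [negB])

theorem posB_inj {n : ℕ} {i j : Fin n} (h : posB i = posB j) : i = j := by
  have := congrArg Subtype.val h
  simp only [posB] at this
  exact Fin.ext (by omega)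

theorem countP_ofFn {n : ℕ} (f : Fin n → ℤ) (p : ℤ → Bool) :
    (List.ofFn f).countP p = (Finset.univ.filter fun i => p (f i) = true).card := by
  induction n with
  | zero => simp
  | succ m ih =>
    rw [List.ofFn_succ, List.countP_cons, ih (fun i => f i.succ), Finset.card_filter,
      Finset.card_filter, Fin.sum_univ_succ]
    exact add_comm _ _

theorem negCount_eq {n : ℕ} (σ : Equiv.Perm (BSet n)) : negCount σ = negL (win σ) := by
  rw [negCount, negL, win, countP_ofFn]
  congr 1
  apply Finset.filter_congr
  intro i _
  simp

theorem descB_eq {n : ℕ} (σ : Equiv.Perm (BSet n)) : descB σ = desL (win σ) := rfl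

theorem win_OKL {n : ℕ} {σ : Equiv.Perm (BSet n)} (h : IsSigned σ) : OKL n (win σ) := by
  refine ⟨by simp [win], ?_, ?_⟩
  · intro x hx
    rw [win, List.mem_ofFn] at hx
    obtain ⟨i, rfl⟩ := hx
    have hb := (σ (posB i)).2
    simp only [Finset.mem_Icc] at hb
    constructor
    · intro h0
      have : σ (posB i) = σ (zeroB n) := Subtype.ext (by rw [signed_zero h]; exact h0)
      have := σ.injective this
      have := congrArg Subtype.val this
      simp [posB, zeroB] at this
      omega
    · rw [abs_le]; exact hb
  · rw [win, List.map_ofFn, List.nodup_ofFn]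
    intro i j hij
    simp only [Function.comp_apply] at hij
    rcases abs_eq_abs.mp hij with he | he
    · exact posB_inj (σ.injective (Subtype.ext he))
    · exfalso
      have hs := h (posB j)
      have : σ (posB i) = σ (negB (posB j)) := Subtype.ext (by rw [hs]; exact he)
      have := congrArg Subtype.val (σ.injective this)
      simp [posB, negB] at this
      omega

theorem mem_SW {n : ℕ} {l : List ℤ} : l ∈ SW n ↔ OKL n l := by
  constructor
  · intro hl
    rw [SW, Finset.mem_image] at hl
    obtain ⟨σ, hσ, rfl⟩ := hl
    exact win_OKL (Finset.mem_filter.mp hσ).2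
  · rintro ⟨hlen, hmem, hnd⟩
    classical
    -- value function
    set vf : ℤ → ℤ := fun t =>
      if 0 < t then l.getD (t.toNat - 1) 0
      else if t < 0 then -(l.getD ((-t).toNat - 1) 0) else 0 with hvf
    have habs : ∀ j : ℕ, |l.getD j 0| ≤ (n : ℤ) := by
      intro j
      by_cases hj : j < l.length
      · rw [List.getD_eq_getElem _ _ hj]
        exact (hmem _ (List.getElem_mem hj)).2
      · rw [List.getD_eq_default _ _ (by omega)]
        simp
    have hnz : ∀ j : ℕ, j < l.length → l.getD j 0 ≠ 0 := by
      intro j hj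
      rw [List.getD_eq_getElem _ _ hj]
      exact (hmem _ (List.getElem_mem hj)).1
    have hinja : ∀ j1 j2 : ℕ, j1 < l.length → j2 < l.length →
        |l.getD j1 0| = |l.getD j2 0| → j1 = j2 := by
      intro j1 j2 h1 h2 he
      rw [List.getD_eq_getElem _ _ h1, List.getD_eq_getElem _ _ h2] at he
      have h1' : j1 < (l.map (fun x => |x|)).length := by simpa using h1
      have h2' : j2 < (l.map (fun x => |x|)).length := by simpa using h2
      exact (hnd.getElem_inj_iff (hi := h1') (hj := h2')).mp (by simpa using he)
    have hvf_neg : ∀ t : ℤ, vf (-t) = -(vf t) := by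
      intro t
      rcases lt_trichotomy t 0 with ht | ht | ht
      · simp only [hvf]
        rw [if_pos (by omega : (0:ℤ) < -t), if_neg (by omega : ¬ (0:ℤ) < t), if_pos ht, neg_neg]
      · subst ht
        simp only [hvf]
        norm_num
      · simp only [hvf]
        rw [if_neg (by omega : ¬ (0:ℤ) < -t), if_pos (by omega : -t < 0), if_pos ht, neg_neg]
    have key : ∀ t : ℤ, t ≠ 0 → -(n:ℤ) ≤ t → t ≤ n →
        vf t ≠ 0 ∧ |vf t| = |l.getD (t.natAbs - 1) 0| ∧ t.natAbs - 1 < l.length := by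
      intro t ht0 htl htu
      have hidx : t.natAbs - 1 < l.length := by omega
      rcases lt_or_gt_of_ne ht0 with ht | ht
      · have : vf t = -(l.getD ((-t).toNat - 1) 0) := by
          rw [hvf]; simp only; rw [if_neg (by omega), if_pos ht]
        have harg : (-t).toNat - 1 = t.natAbs - 1 := by omega
        rw [this, harg]
        refine ⟨by simpa using hnz _ hidx, by simp, hidx⟩
      · have : vf t = l.getD (t.toNat - 1) 0 := by
          rw [hvf]; simp only; rw [if_pos ht]
        have harg : t.toNat - 1 = t.natAbs - 1 := by omega
        rw [this, harg]
        exact ⟨hnz _ hidx, rfl, hidx⟩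
    have hvf0 : vf 0 = 0 := by rw [hvf]; simp
    set g : BSet n → BSet n := fun x =>
      ⟨vf x.1, by
        have hb := x.2
        simp only [Finset.mem_Icc] at hb ⊢
        by_cases hx0 : x.1 = 0
        · rw [hx0, hvf0]; omega
        · have := (key x.1 hx0 hb.1 hb.2).2.1
          have h2 := habs (x.1.natAbs - 1)
          constructor <;> [skip; skip] <;>
          · have := abs_le.mp (this ▸ h2)
            omega⟩ with hg
    have hginj : Function.Injective g := by
      intro x y hxy
      have hv : vf x.1 = vf y.1 := congrArg Subtype.val hxy
      have hbx := x.2; have hby := y.2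
      simp only [Finset.mem_Icc] at hbx hby
      apply Subtype.ext
      by_cases hx0 : x.1 = 0 <;> by_cases hy0 : y.1 = 0
      · rw [hx0, hy0]
      · exact absurd (by rw [← hv, hx0, hvf0]) ((key y.1 hy0 hby.1 hby.2).1 ∘ Eq.symm)
      · exact absurd (by rw [hv, hy0, hvf0]) (key x.1 hx0 hbx.1 hbx.2).1
      · obtain ⟨kx1, kx2, kx3⟩ := key x.1 hx0 hbx.1 hbx.2
        obtain ⟨ky1, ky2, ky3⟩ := key y.1 hy0 hby.1 hby.2
        have hj : x.1.natAbs - 1 = y.1.natAbs - 1 :=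
          hinja _ _ kx3 ky3 (by rw [← kx2, ← ky2, hv])
        have habs_eq : |x.1| = |y.1| := by
          have hna : x.1.natAbs = y.1.natAbs := by omega
          rw [Int.abs_eq_natAbs, Int.abs_eq_natAbs, hna]
        rcases abs_eq_abs.mp habs_eq with he | he
        · exact he
        · exfalso
          rw [he, hvf_neg] at hv
          exact kx1 (by omega)
    have hgbij : Function.Bijective g := Finite.injective_iff_bijective.mp hginj
    set σ : Equiv.Perm (BSet n) := Equiv.ofBijective g hgbij with hσ
    have happ : ∀ x, σ x = g x := fun x => rfl
    have hsig : IsSigned σ := by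
      intro x
      rw [happ, happ]
      show vf (negB x).1 = -(vf x.1)
      have : (negB x).1 = -(x.1) := rfl
      rw [this, hvf_neg]
    have hwin : win σ = l := by
      apply List.ext_getElem (by simp [win, hlen])
      intro i h1 h2
      have hi : i < n := by simpa [win] using h1
      have hgoal : (win σ)[i]'h1 = vf ((i : ℤ) + 1) := by
        simp only [win, List.getElem_ofFn]
        rfl
      rw [hgoal]
      have : vf ((i : ℤ) + 1) = l.getD (((i : ℤ) + 1).toNat - 1) 0 := by
        simp only [hvf]
        rw [if_pos (by omega : (0:ℤ) < (i : ℤ) + 1)]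
      rw [this, show ((i : ℤ) + 1).toNat - 1 = i by omega, List.getD_eq_getElem _ _ h2]
    exact Finset.mem_image.mpr ⟨σ, Finset.mem_filter.mpr ⟨Finset.mem_univ _, hsig⟩, hwin⟩

theorem descCount_le (c : ℤ) (l : List ℤ) : descCount (c :: l) ≤ l.length := by
  induction l generalizing c with
  | nil => simp [descCount]
  | cons b t ih =>
    show (if b < c then 1 else 0) + descCount (b :: t) ≤ t.length + 1
    have := ih b
    split <;> omega

theorem pos_rep {n : ℕ} (x : BSet n) (hx : 0 < x.1) : ∃ i : Fin n, x = posB i := by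
  have hb := x.2
  simp only [Finset.mem_Icc] at hb
  refine ⟨⟨x.1.toNat - 1, by omega⟩, Subtype.ext ?_⟩
  simp only [posB]
  omega

theorem win_injOn {n : ℕ} (σ τ : Equiv.Perm (BSet n)) (hσ : IsSigned σ) (hτ : IsSigned τ)
    (h : win σ = win τ) : σ = τ := by
  have hw : ∀ i : Fin n, (σ (posB i)).1 = (τ (posB i)).1 :=
    fun i => congrFun (List.ofFn_inj.mp h) i
  apply Equiv.ext
  intro x
  rcases lt_trichotomy x.1 0 with hx | hx | hx
  · have hnx : 0 < (negB x).1 := by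
      have : (negB x).1 = -x.1 := rfl
      omega
    obtain ⟨i, hi⟩ := pos_rep (negB x) hnx
    have hxi : x = negB (posB i) := by rw [← hi, negB_negB]
    rw [hxi]
    exact Subtype.ext (by rw [hσ (posB i), hτ (posB i), hw i])
  · have hx0 : x = zeroB n := Subtype.ext hx
    rw [hx0]
    exact Subtype.ext (by rw [signed_zero hσ, signed_zero hτ])
  · obtain ⟨i, rfl⟩ := pos_rep x hx
    exact Subtype.ext (hw i)

noncomputable def NN (n k : ℕ) (p : Bool) : ℕ :=
  ((SW n).filter fun l => desL l = k ∧ (Even (negL l) ↔ p = true)).card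

theorem card_SW_filter {n : ℕ} (Q : List ℤ → Prop) [DecidablePred Q] :
    ((SW n).filter Q).card
      = (Finset.univ.filter fun σ : Equiv.Perm (BSet n) => IsSigned σ ∧ Q (win σ)).card := by
  rw [SW, Finset.filter_image, ← Finset.filter_filter]
  apply Finset.card_image_of_injOn
  intro σ hσ τ hτ hw
  simp only [Finset.coe_filter, Set.mem_setOf_eq, Finset.mem_filter] at hσ hτ
  exact win_injOn σ τ hσ.1.2 hτ.1.2 hw

theorem eulerianD_eq (n k : ℕ) : eulerianD n k = NN n k true := by
  rw [eulerianD, Fintype.card_subtype, NN, card_SW_filter]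
  congr 1
  apply Finset.filter_congr
  intro σ _
  rw [descB_eq σ, negCount_eq σ]
  tauto

theorem eulerianDt_eq (n k : ℕ) : eulerianDt n k = NN n k false := by
  rw [eulerianDt, Fintype.card_subtype, NN, card_SW_filter]
  congr 1
  apply Finset.filter_congr
  intro σ _
  rw [descB_eq σ, negCount_eq σ]
  simp only [Bool.false_eq_true, iff_false]
  tauto

theorem desL_le_of_mem_SW {n : ℕ} {l : List ℤ} (h : l ∈ SW n) : desL l ≤ n := by
  have hlen := (mem_SW.mp h).1
  rw [desL] at *
  exact hlen ▸ descCount_le 0 l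

theorem NN_high {n k : ℕ} (p : Bool) (h : n < k) : NN n k p = 0 := by
  rw [NN, Finset.card_eq_zero]
  apply Finset.filter_false_of_mem
  intro l hl
  intro hc
  have := desL_le_of_mem_SW hl
  omega

theorem negL_insertIdx (l : List ℤ) (x : ℤ) (i : ℕ) (hi : i ≤ l.length) :
    negL (l.insertIdx i x) = negL l + (if x < 0 then 1 else 0) := by
  rw [negL, (List.perm_insertIdx x l hi).countP_eq, List.countP_cons]
  simp [negL]

theorem OKL_insertIdx {n : ℕ} {l : List ℤ} (h : OKL n l) (i : ℕ) (hi : i ≤ n) (x : ℤ)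
    (hx : x = (n : ℤ) + 1 ∨ x = -((n : ℤ) + 1)) : OKL (n + 1) (l.insertIdx i x) := by
  obtain ⟨hlen, hmem, hnd⟩ := h
  have hi' : i ≤ l.length := by omega
  have hp := List.perm_insertIdx x l hi'
  refine ⟨by rw [hp.length_eq]; simp [hlen], ?_, ?_⟩
  · intro y hy
    rcases List.mem_cons.mp (hp.mem_iff.mp hy) with rfl | hy
    ·
      rcases hx with rfl | rfl
      · constructor
        · intro hc; omega
        · rw [abs_of_nonneg (by omega)]; push_cast; omega
      · constructor
        · intro hc; omega
        · rw [abs_of_nonpos (by omega)]; push_cast; omega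
    · have := hmem y hy
      exact ⟨this.1, by push_cast; omega⟩
  · have hpm := hp.map (fun t : ℤ => |t|)
    rw [hpm.nodup_iff, List.map_cons, List.nodup_cons]
    refine ⟨?_, hnd⟩
    intro hc
    rw [List.mem_map] at hc
    obtain ⟨y, hy, hxy⟩ := hc
    have := (hmem y hy).2
    have hxa : |x| = (n : ℤ) + 1 := by
      rcases hx with rfl | rfl
      · rw [abs_of_nonneg (by omega)]
      · rw [abs_of_nonpos (by omega)]; omega
    omega

theorem insertIdx_eraseIdx_getElem : ∀ (l : List ℤ) (i : ℕ) (h : i < l.length),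
    (l.eraseIdx i).insertIdx i (l[i]'h) = l := by
  intro l
  induction l with
  | nil => intro i h; simp at h
  | cons a t ih =>
    intro i h
    cases i with
    | zero => simp
    | succ j =>
      have hj : j < t.length := by simpa using h
      show ((a :: t).eraseIdx (j+1)).insertIdx (j+1) ((a :: t)[j+1]'h) = a :: t
      rw [List.eraseIdx_cons_succ, List.insertIdx_succ_cons]
      congr 1
      exact ih j hj

theorem exists_top {n : ℕ} {l : List ℤ} (h : OKL (n + 1) l) :
    ∃ (i : ℕ) (hi : i < l.length), |l[i]'hi| = (n : ℤ) + 1 ∧ OKL n (l.eraseIdx i) ∧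
      l = (l.eraseIdx i).insertIdx i (l[i]'hi) := by
  obtain ⟨hlen, hmem, hnd⟩ := h
  have hstep : ((n : ℤ) + 1) ∈ l.map (fun t => |t|) := by
    by_contra hc
    have hsub : (l.map (fun t => |t|)).toFinset ⊆ Finset.Icc (1 : ℤ) n := by
      intro y hy
      rw [List.mem_toFinset, List.mem_map] at hy
      obtain ⟨z, hz, rfl⟩ := hy
      have h1 := hmem z hz
      have h2 : |z| ≠ (n : ℤ) + 1 := fun he => hc (he ▸ List.mem_map.mpr ⟨z, hz, rfl⟩)
      rw [Finset.mem_Icc]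
      have h3 : (1 : ℤ) ≤ |z| := Int.one_le_abs h1.1
      have h4 := h1.2
      push_cast at h4
      omega
    have hcard := Finset.card_le_card hsub
    rw [List.toFinset_card_of_nodup hnd, Int.card_Icc] at hcard
    simp only [List.length_map, hlen] at hcard
    omega
  rw [List.mem_map] at hstep
  obtain ⟨x, hxl, hxa⟩ := hstep
  obtain ⟨i, hi, rfl⟩ := List.mem_iff_getElem.mp hxl
  refine ⟨i, hi, hxa, ?_, (insertIdx_eraseIdx_getElem l i hi).symm⟩
  have hlen' : (l.eraseIdx i).length = n := by
    rw [List.length_eraseIdx_of_lt hi]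
    omega
  have hnd' : ((l.eraseIdx i).map (fun t => |t|)).Nodup := by
    refine List.Sublist.nodup ?_ hnd
    exact List.Sublist.map _ (List.eraseIdx_sublist l i)
  refine ⟨hlen', ?_, hnd'⟩
  intro y hy
  have hyl : y ∈ l := List.mem_of_mem_eraseIdx hy
  refine ⟨(hmem y hyl).1, ?_⟩
  have hb := (hmem y hyl).2
  push_cast at hb
  by_cases he : |y| = (n : ℤ) + 1
  · exfalso
    obtain ⟨j, hj, hjy⟩ := List.mem_iff_getElem.mp hy
    rw [List.getElem_eraseIdx] at hjy
    split at hjy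
    · -- y = l[j], j < i
      have : (l.map (fun t => |t|))[j]'(by simpa using by omega : j < (l.map _).length)
          = (l.map (fun t => |t|))[i]'(by simpa using hi) := by
        simp only [List.getElem_map]
        rw [hjy, he, hxa]
      have := hnd.getElem_inj_iff.mp this
      omega
    · -- y = l[j+1], i ≤ j
      rename_i hji
      have hj1 : j + 1 < l.length := by
        have := List.length_eraseIdx_of_lt hi ▸ hj
        omega
      have : (l.map (fun t => |t|))[j+1]'(by simpa using hj1)
          = (l.map (fun t => |t|))[i]'(by simpa using hi) := by
        simp only [List.getElem_map]
        rw [hjy, he, hxa]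
      have := hnd.getElem_inj_iff.mp this
      omega
  · omega

abbrev insV (n : ℕ) (e : Bool) : ℤ := if e then ((n : ℤ) + 1) else -((n : ℤ) + 1)

abbrev insL (n : ℕ) (l : List ℤ) (q : ℕ × Bool) : List ℤ := l.insertIdx q.1 (insV n q.2)

abbrev QQ (K : ℕ) (p : Bool) (l : List ℤ) : Prop :=
  desL l = K ∧ (Even (negL l) ↔ p = true)

theorem NN_eq_filter (n K : ℕ) (p : Bool) :
    NN n K p = ((SW n).filter (QQ K p)).card := rfl

theorem insV_abs (n : ℕ) (e : Bool) : |insV n e| = (n : ℤ) + 1 := by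
  cases e
  · show |(-((n:ℤ)+1))| = (n:ℤ)+1
    rw [abs_of_nonpos (by omega)]
    omega
  · show |((n:ℤ)+1)| = (n:ℤ)+1
    rw [abs_of_nonneg (by omega)]

theorem NN_rec (n K : ℕ) (p : Bool) :
    NN (n + 1) K p = ∑ l ∈ SW n,
      ((Finset.range (n + 1) ×ˢ (Finset.univ : Finset Bool)).filter
        (fun q => QQ K p (insL n l q))).card := by
  classical
  have haux : ∀ (l₁ l₂ : List ℤ) (i₁ i₂ : ℕ) (e₁ e₂ : Bool), OKL n l₁ → OKL n l₂ →
      i₁ ≤ n → i₂ ≤ n →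
      l₁.insertIdx i₁ (insV n e₁) = l₂.insertIdx i₂ (insV n e₂) → ¬ (i₁ < i₂) := by
    intro l₁ l₂ i₁ i₂ e₁ e₂ hok₁ hok₂ hle₁ hle₂ heq hlt
    have hlen₂ : l₂.length = n := hok₂.1
    have hlen₁ : l₁.length = n := hok₁.1
    have hlt2 : i₁ < l₂.length := by omega
    have h1 : (l₁.insertIdx i₁ (insV n e₁))[i₁]'(by
        rw [List.length_insertIdx, if_pos (by omega : i₁ ≤ l₁.length)]
        omega) = insV n e₁ :=
      List.getElem_insertIdx_self _
    have h2 : (l₂.insertIdx i₂ (insV n e₂))[i₁]'(by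
        rw [List.length_insertIdx, if_pos (by omega : i₂ ≤ l₂.length)]
        omega) = l₂[i₁]'hlt2 :=
      List.getElem_insertIdx_of_lt (l := l₂) hlt _
    have h12 := List.getElem_of_eq heq (i := i₁) (by
        rw [List.length_insertIdx, if_pos (by omega : i₁ ≤ l₁.length)]
        omega)
    have hv : insV n e₁ = l₂[i₁]'hlt2 := by rw [← h1, h12, h2]
    have hb := (hok₂.2.1 _ (List.getElem_mem hlt2)).2
    have ha := insV_abs n e₁
    rw [hv] at ha
    omega
  rw [NN_eq_filter]
  have key : ((SW (n+1)).filter (QQ K p)).card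
      = ((SW n ×ˢ (Finset.range (n+1) ×ˢ (Finset.univ : Finset Bool))).filter
          (fun z => QQ K p (insL n z.1 z.2))).card := by
    symm
    apply Finset.card_bij (fun z _ => insL n z.1 z.2)
    · rintro ⟨l, i, e⟩ hz
      simp only [Finset.mem_filter, Finset.mem_product, Finset.mem_range] at hz
      obtain ⟨⟨hl, hi, -⟩, hQz⟩ := hz
      have hi' : i < n + 1 := by simpa using hi
      rw [Finset.mem_filter]
      refine ⟨mem_SW.mpr (OKL_insertIdx (mem_SW.mp hl) i (by omega) _ ?_), hQz⟩
      cases e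
      · exact Or.inr rfl
      · exact Or.inl rfl
    · rintro ⟨l₁, i₁, e₁⟩ hz₁ ⟨l₂, i₂, e₂⟩ hz₂ heq
      simp only [Finset.mem_filter, Finset.mem_product, Finset.mem_range] at hz₁ hz₂
      obtain ⟨⟨hl₁, hi₁, -⟩, -⟩ := hz₁
      obtain ⟨⟨hl₂, hi₂, -⟩, -⟩ := hz₂
      have hi₁' : i₁ < n + 1 := by simpa using hi₁
      have hi₂' : i₂ < n + 1 := by simpa using hi₂
      dsimp only at heq
      have hok₁ := mem_SW.mp hl₁
      have hok₂ := mem_SW.mp hl₂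
      have hL1 : l₁.length = n := hok₁.1
      have hL2 : l₂.length = n := hok₂.1
      have hii : i₁ = i₂ := by
        have a1 := haux l₁ l₂ i₁ i₂ e₁ e₂ hok₁ hok₂ (by omega) (by omega) heq
        have a2 := haux l₂ l₁ i₂ i₁ e₂ e₁ hok₂ hok₁ (by omega) (by omega) heq.symm
        omega
      subst hii
      have hee : e₁ = e₂ := by
        have h1 : (l₁.insertIdx i₁ (insV n e₁))[i₁]'(by
            rw [List.length_insertIdx, if_pos (by rw [hok₁.1]; omega)]
            rw [hok₁.1]; omega) = insV n e₁ :=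
          List.getElem_insertIdx_self _
        have h2 : (l₂.insertIdx i₁ (insV n e₂))[i₁]'(by
            rw [List.length_insertIdx, if_pos (by rw [hok₂.1]; omega)]
            rw [hok₂.1]; omega) = insV n e₂ :=
          List.getElem_insertIdx_self _
        have h12 := List.getElem_of_eq heq (i := i₁) (by
            rw [List.length_insertIdx, if_pos (by rw [hok₁.1]; omega)]
            rw [hok₁.1]; omega)
        have hv : insV n e₁ = insV n e₂ := by rw [← h1, h12, h2]
        cases e₁ <;> cases e₂
        · rfl
        · exfalso
          rw [show insV n false = -((n:ℤ)+1) from rfl, show insV n true = ((n:ℤ)+1) from rfl] at hv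
          omega
        · exfalso
          rw [show insV n true = ((n:ℤ)+1) from rfl, show insV n false = -((n:ℤ)+1) from rfl] at hv
          omega
        · rfl
      subst hee
      have hll : l₁ = l₂ := List.insertIdx_injective i₁ (insV n e₁) heq
      rw [hll]
    · intro l' hl'
      rw [Finset.mem_filter] at hl'
      obtain ⟨hmem', hQ'⟩ := hl'
      obtain ⟨i, hi, habs, hok, hdec⟩ := exists_top (mem_SW.mp hmem')
      have hlen' : l'.length = n + 1 := (mem_SW.mp hmem').1
      have hx : insV n (decide (0 < l'[i]'hi)) = l'[i]'hi := by
        by_cases hpos : 0 < l'[i]'hi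
        · have hv : l'[i]'hi = (n : ℤ) + 1 := by
            rcases (abs_eq (by omega : (0:ℤ) ≤ (n:ℤ)+1)).mp habs with h | h
            · exact h
            · omega
          rw [decide_eq_true hpos, hv]
          rfl
        · have hv : l'[i]'hi = -((n : ℤ) + 1) := by
            rcases (abs_eq (by omega : (0:ℤ) ≤ (n:ℤ)+1)).mp habs with h | h
            · omega
            · exact h
          rw [decide_eq_false hpos, hv]
          rfl
      refine ⟨(l'.eraseIdx i, i, decide (0 < l'[i]'hi)), ?_, ?_⟩
      · rw [Finset.mem_filter, Finset.mem_product, Finset.mem_product]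
        dsimp only
        refine ⟨⟨mem_SW.mpr hok, Finset.mem_range.mpr (by omega), Finset.mem_univ _⟩, ?_⟩
        show QQ K p ((l'.eraseIdx i).insertIdx i (insV n _))
        rw [hx, ← hdec]
        exact hQ'
      · show (l'.eraseIdx i).insertIdx i (insV n _) = l'
        rw [hx, ← hdec]
  rw [key, Finset.card_filter, Finset.sum_product]
  exact Finset.sum_congr rfl fun l _ => (Finset.card_filter _ _).symm

theorem inner_card (n K : ℕ) (p : Bool) (l : List ℤ) (hl : l ∈ SW n) :
    ((Finset.range (n + 1) ×ˢ (Finset.univ : Finset Bool)).filter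
        (fun q => QQ K p (insL n l q))).card
    = if desL l = K then (if Even (negL l) ↔ p = true then desL l + 1 else desL l)
      else if desL l + 1 = K then
        (if Even (negL l) ↔ p = true then n - desL l else n - desL l + 1)
      else 0 := by
  obtain ⟨hlen, hmeml, hnd⟩ := mem_SW.mp hl
  have hbig : ∀ y ∈ (0:ℤ) :: l, y < (n:ℤ) + 1 := by
    intro y hy
    rcases List.mem_cons.mp hy with rfl | hy
    · omega
    · have h1 := abs_le.mp (hmeml y hy).2
      omega
  have hsmall : ∀ y ∈ (0:ℤ) :: l, -((n:ℤ) + 1) < y := by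
    intro y hy
    rcases List.mem_cons.mp hy with rfl | hy
    · omega
    · have h1 := abs_le.mp (hmeml y hy).2
      omega
  have hplus := count_insert_generic l ((n:ℤ)+1) K (Or.inl hbig) 0
      (by rw [Nat.add_zero]; exact desc_insert_end_big _ l 0 hbig)
  have hminus := count_insert_generic l (-((n:ℤ)+1)) K (Or.inr hsmall) 1
      (desc_insert_end_small _ l 0 hsmall)
  simp only [Nat.add_zero] at hplus
  rw [hlen] at hplus hminus
  have hnegp : ∀ i, i < n + 1 → negL (l.insertIdx i ((n:ℤ)+1)) = negL l := by
    intro i hi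
    rw [negL_insertIdx l _ i (by omega), if_neg (by omega : ¬ ((n:ℤ)+1 < 0)), Nat.add_zero]
  have hnegm : ∀ i, i < n + 1 → negL (l.insertIdx i (-((n:ℤ)+1))) = negL l + 1 := by
    intro i hi
    rw [negL_insertIdx l _ i (by omega), if_pos (by omega : -((n:ℤ)+1) < 0)]
  rw [Finset.card_filter, Finset.sum_product_right, Fintype.sum_bool]
  have htrue : (∑ i ∈ Finset.range (n+1), if QQ K p (insL n l (i, true)) then 1 else 0)
      = if Even (negL l) ↔ p = true
        then ((if K = desL l then 1 else 0) + (if K = desL l then desL l else 0)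
          + (if K = desL l + 1 then n - desL l else 0))
        else 0 := by
    by_cases hA : Even (negL l) ↔ p = true
    · rw [if_pos hA, ← hplus, Finset.card_filter]
      apply Finset.sum_congr rfl
      intro i hi
      congr 1
      rw [eq_iff_iff]
      constructor
      · rintro ⟨h1, -⟩
        exact h1
      · intro h1
        refine ⟨h1, ?_⟩
        show Even (negL (l.insertIdx i ((n:ℤ)+1))) ↔ p = true
        rw [hnegp i (Finset.mem_range.mp hi)]
        exact hA
    · rw [if_neg hA]
      apply Finset.sum_eq_zero
      intro i hi
      rw [if_neg]
      rintro ⟨-, h2⟩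
      rw [show insL n l (i, true) = l.insertIdx i ((n:ℤ)+1) from rfl,
        hnegp i (Finset.mem_range.mp hi)] at h2
      exact hA h2
  have hfalse : (∑ i ∈ Finset.range (n+1), if QQ K p (insL n l (i, false)) then 1 else 0)
      = if Even (negL l) ↔ p = true
        then 0
        else ((if K = desL l + 1 then 1 else 0) + (if K = desL l then desL l else 0)
          + (if K = desL l + 1 then n - desL l else 0)) := by
    by_cases hA : Even (negL l) ↔ p = true
    · rw [if_pos hA]
      apply Finset.sum_eq_zero
      intro i hi
      rw [if_neg]
      rintro ⟨-, h2⟩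
      rw [show insL n l (i, false) = l.insertIdx i (-((n:ℤ)+1)) from rfl,
        hnegm i (Finset.mem_range.mp hi), Nat.even_add_one] at h2
      tauto
    · rw [if_neg hA, ← hminus, Finset.card_filter]
      apply Finset.sum_congr rfl
      intro i hi
      congr 1
      rw [eq_iff_iff]
      constructor
      · rintro ⟨h1, -⟩
        exact h1
      · intro h1
        refine ⟨h1, ?_⟩
        show Even (negL (l.insertIdx i (-((n:ℤ)+1)))) ↔ p = true
        rw [hnegm i (Finset.mem_range.mp hi), Nat.even_add_one]
        tauto
  rw [htrue, hfalse]
  by_cases hA : Even (negL l) ↔ p = true <;> [rw [if_pos hA, if_pos hA]; rw [if_neg hA, if_neg hA]] <;>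
    split_ifs <;> omega

set_option maxHeartbeats 1000000 in
theorem NN_master_zero (n : ℕ) (p : Bool) : NN (n + 1) 0 p = NN n 0 p := by
  rw [NN_rec]
  have hpt : ∀ l ∈ SW n,
      ((Finset.range (n + 1) ×ˢ (Finset.univ : Finset Bool)).filter
        (fun q => QQ 0 p (insL n l q))).card
      = if desL l = 0 ∧ (Even (negL l) ↔ p = true) then 1 else 0 := by
    intro l hl
    rw [inner_card n 0 p l hl]
    split_ifs <;> first | omega | tauto
  rw [Finset.sum_congr rfl hpt, ← Finset.card_filter]
  rfl

set_option maxHeartbeats 2000000 in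
theorem NN_master_succ (n m : ℕ) (p : Bool) :
    NN (n + 1) (m + 1) p
      = (m + 2) * NN n (m + 1) p + (m + 1) * NN n (m + 1) (!p)
        + (n - m) * NN n m p + (n - m + 1) * NN n m (!p) := by
  rw [NN_rec]
  have hnp : ∀ l : List ℤ, ((Even (negL l)) ↔ (!p) = true) ↔ ¬(Even (negL l) ↔ p = true) := by
    intro l
    cases p <;> simp
  have hpt : ∀ l ∈ SW n,
      ((Finset.range (n + 1) ×ˢ (Finset.univ : Finset Bool)).filter
        (fun q => QQ (m + 1) p (insL n l q))).card
      = (if desL l = m + 1 ∧ (Even (negL l) ↔ p = true) then m + 2 else 0)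
        + ((if desL l = m + 1 ∧ (Even (negL l) ↔ (!p) = true) then m + 1 else 0)
        + ((if desL l = m ∧ (Even (negL l) ↔ p = true) then n - m else 0)
        + (if desL l = m ∧ (Even (negL l) ↔ (!p) = true) then n - m + 1 else 0))) := by
    intro l hl
    rw [inner_card n (m + 1) p l hl]
    simp only [hnp]
    by_cases hA : Even (negL l) ↔ p = true <;>
      simp only [hA, not_true_eq_false, not_false_eq_true, and_true, and_false, iff_true,
        if_true, if_false] <;>
      split_ifs <;> omega
  rw [Finset.sum_congr rfl hpt, Finset.sum_add_distrib, Finset.sum_add_distrib,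
    Finset.sum_add_distrib, ← Finset.sum_filter, ← Finset.sum_filter, ← Finset.sum_filter,
    ← Finset.sum_filter, Finset.sum_const, Finset.sum_const, Finset.sum_const,
    Finset.sum_const, smul_eq_mul, smul_eq_mul, smul_eq_mul, smul_eq_mul]
  show _ * _ + (_ * _ + (_ * _ + _ * _)) = _
  simp only [NN]
  ring

theorem SW_zero : SW 0 = {([] : List ℤ)} := by
  ext l
  rw [mem_SW, Finset.mem_singleton]
  constructor
  · rintro ⟨hlen, -, -⟩
    exact List.length_eq_zero_iff.mp hlen
  · rintro rfl
    exact ⟨rfl, by simp, by simp⟩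

theorem NN_zero_zero (p : Bool) : NN 0 0 p = if p then 1 else 0 := by
  rw [NN, SW_zero]
  have hdes : desL [] = 0 := rfl
  have hneg : negL [] = 0 := rfl
  cases p <;> simp [Finset.filter_singleton, hdes, hneg]

theorem NN_zero (n : ℕ) (p : Bool) : NN n 0 p = if p then 1 else 0 := by
  induction n with
  | zero => exact NN_zero_zero p
  | succ k ih => rw [NN_master_zero]; exact ih

theorem NN_diag (n : ℕ) :
    NN n n true = (if Even n then 1 else 0) ∧ NN n n false = (if Even n then 0 else 1) := by
  induction n with
  | zero => rw [NN_zero_zero, NN_zero_zero]; simp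
  | succ k ih =>
    have hs : ∀ p, NN (k + 1) (k + 1) p = NN k k (!p) := by
      intro p
      rw [NN_master_succ, NN_high _ (by omega), NN_high _ (by omega), Nat.sub_self]
      ring
    constructor
    · rw [hs true]
      show NN k k false = _
      rw [ih.2]
      by_cases h : Even k <;> simp [h, Nat.even_add_one]
    · rw [hs false]
      show NN k k true = _
      rw [ih.1]
      by_cases h : Even k <;> simp [h, Nat.even_add_one]

theorem NN_diff (n : ℕ) : ∀ k, (NN n k true : ℤ) - NN n k false = (-1)^k * (n.choose k : ℤ) := by
  induction n with
  | zero =>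
    intro k
    cases k with
    | zero => rw [NN_zero_zero, NN_zero_zero]; simp
    | succ m =>
      rw [NN_high _ (by omega), NN_high _ (by omega), Nat.choose_eq_zero_of_lt (by omega)]
      simp
  | succ n ih =>
    intro k
    cases k with
    | zero =>
      rw [NN_master_zero, NN_master_zero]
      simpa using ih 0
    | succ m =>
      rw [NN_master_succ, NN_master_succ, Nat.choose_succ_succ']
      simp only [Bool.not_true, Bool.not_false]
      have h1 := ih (m + 1)
      have h2 := ih m
      push_cast
      linear_combination h1 - h2

theorem final1 (n : ℕ) : eulerianD n 0 = 1 := by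
  rw [eulerianD_eq, NN_zero]
  simp

theorem final2 (n : ℕ) : 2 * (eulerianD n n : ℤ) = 1 + (-1) ^ n := by
  rw [eulerianD_eq]
  rcases Nat.even_or_odd n with h | h
  · rw [(NN_diag n).1, if_pos h, Even.neg_one_pow h]
    norm_num
  · rw [(NN_diag n).1, if_neg (Nat.not_even_iff_odd.mpr h), Odd.neg_one_pow h]
    norm_num

theorem final3 (n k : ℕ) (hk : 0 < k) (hkn : k < n) :
    (eulerianD n k : ℤ) = (2 * (k : ℤ) + 1) * eulerianD (n - 1) k
      + (2 * (n : ℤ) - 2 * (k : ℤ) + 1) * eulerianD (n - 1) (k - 1)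
      + (-1) ^ k * ((n - 1).choose (k - 1) : ℤ) := by
  obtain ⟨m, rfl⟩ : ∃ m, k = m + 1 := ⟨k - 1, by omega⟩
  obtain ⟨n', rfl⟩ : ∃ n', n = n' + 1 := ⟨n - 1, by omega⟩
  have hmn : m < n' := by omega
  simp only [Nat.add_sub_cancel]
  rw [eulerianD_eq, eulerianD_eq, eulerianD_eq, NN_master_succ]
  simp only [Bool.not_true]
  have h1 := NN_diff n' (m + 1)
  have h2 := NN_diff n' m
  have hch : ((m:ℤ) + 1) * (n'.choose (m+1) : ℤ) = ((n':ℤ) - m) * (n'.choose m : ℤ) := by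
    have hc := congrArg (fun t : ℕ => (t : ℤ)) (Nat.choose_succ_right_eq n' m)
    push_cast [Nat.cast_sub hmn.le] at hc
    linarith
  push_cast [Nat.cast_sub hmn.le]
  linear_combination (-(m:ℤ) - 1) * h1 + (-((n':ℤ) - m + 1)) * h2 + (-1)^m * hch

end Aux10

theorem stmt10 :
    (∀ n : ℕ, eulerianD n 0 = 1) ∧
    (∀ n : ℕ, 2 * (eulerianD n n : ℤ) = 1 + (-1) ^ n) ∧
    (∀ n k : ℕ, 0 < k → k < n →
      (eulerianD n k : ℤ) = (2 * (k : ℤ) + 1) * eulerianD (n - 1) k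
        + (2 * (n : ℤ) - 2 * (k : ℤ) + 1) * eulerianD (n - 1) (k - 1)
        + (-1) ^ k * ((n - 1).choose (k - 1) : ℤ)) :=
  ⟨Aux10.final1, Aux10.final2, fun n k hk hkn => Aux10.final3 n k hk hkn⟩
end

section
/- The numbers D̃(n,k) satisfy the self-contained recurrence: D̃(n,0) = 0, D̃(n,n) = (1 − (−1)^n)/2, and for 0 < k < n (as an identity of integers), D̃(n,k) = (2k+1)·D̃(n−1,k) + (2n−2k+1)·D̃(n−1,k−1) − (−1)^k·C(n−1,k−1), where C denotes the binomial coefficient. -/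
open MeasureTheory Finset

theorem descCount_cons_cons (c a : ℤ) (t : List ℤ) :
    descCount (c :: a :: t) = (if a < c then 1 else 0) + descCount (a :: t) := rfl

theorem descCount_cons_le (c : ℤ) (l : List ℤ) : descCount (c :: l) ≤ l.length := by
  induction l generalizing c with
  | nil => simp [descCount]
  | cons a t ih =>
    rw [descCount_cons_cons]
    have := ih a
    simp only [List.length_cons]
    split <;> omega

theorem bigStep (v : ℤ) : ∀ (l : List ℤ) (c : ℤ), (∀ x ∈ c :: l, x < v) → ∀ p : ℕ,
    descCount (c :: l.insertIdx p v) = descCount (c :: l) ∨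
    descCount (c :: l.insertIdx p v) = descCount (c :: l) + 1 := by
  intro l
  induction l with
  | nil =>
    intro c hc p
    match p with
    | 0 =>
      left
      rw [List.insertIdx_zero, descCount_cons_cons]
      have : ¬ (v < c) := not_lt.2 (hc c (by simp)).le
      rw [if_neg this]; rfl
    | (q+1) => left; rw [List.insertIdx_succ_nil]
  | cons a t ih =>
    intro c hc p
    match p with
    | 0 =>
      rw [List.insertIdx_zero, descCount_cons_cons, descCount_cons_cons, descCount_cons_cons]
      have hav : a < v := hc a (by simp)
      have hcv : ¬ (v < c) := not_lt.2 (hc c (by simp)).le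
      rw [if_neg hcv, if_pos hav]
      split <;> omega
    | (q+1) =>
      rw [List.insertIdx_succ_cons, descCount_cons_cons, descCount_cons_cons]
      rcases ih a (fun x hx => hc x (by simp at hx ⊢; tauto)) q with h | h <;> rw [h]
      · left; rfl
      · right; omega

theorem bigKeep (v : ℤ) : ∀ (l : List ℤ) (c : ℤ), (∀ x ∈ c :: l, x < v) →
    ∑ p ∈ range (l.length + 1),
      (if descCount (c :: l.insertIdx p v) = descCount (c :: l) then 1 else 0) =
    descCount (c :: l) + 1 := by
  intro l
  induction l with
  | nil =>
    intro c hc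
    have h1 : ¬ (v < c) := not_lt.2 (hc c (by simp)).le
    rw [List.length_nil, Finset.sum_range_one, List.insertIdx_zero]
    have h2 : descCount (c :: [v]) = descCount (c :: ([] : List ℤ)) := by
      rw [descCount_cons_cons, if_neg h1]; rfl
    rw [if_pos h2]; rfl
  | cons a t ih =>
    intro c hc
    have hav : a < v := hc a (by simp)
    have hcv : ¬ (v < c) := not_lt.2 (hc c (by simp)).le
    rw [List.length_cons, Finset.sum_range_succ']
    have e1 : ∀ q ∈ range (t.length + 1),
        (if descCount (c :: (a :: t).insertIdx (q+1) v) = descCount (c :: a :: t) then 1 else 0)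
        = (if descCount (a :: t.insertIdx q v) = descCount (a :: t) then (1:ℕ) else 0) := by
      intro q _
      rw [List.insertIdx_succ_cons, descCount_cons_cons, descCount_cons_cons]
      by_cases h : descCount (a :: t.insertIdx q v) = descCount (a :: t)
      · rw [if_pos h, if_pos (by rw [h])]
      · rw [if_neg h, if_neg (by intro hh; exact h (by omega))]
    rw [Finset.sum_congr rfl e1, ih a (fun x hx => hc x (by simp at hx ⊢; tauto))]
    have e0 : descCount (c :: (a :: t).insertIdx 0 v) = 1 + descCount (a :: t) := by
      rw [List.insertIdx_zero, descCount_cons_cons, descCount_cons_cons, if_neg hcv, if_pos hav]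
      omega
    rw [e0, descCount_cons_cons]
    by_cases h : a < c <;> simp only [h, if_true, if_false] <;> first | omega | (split <;> omega)

theorem smallKeep (v : ℤ) : ∀ (l : List ℤ) (c : ℤ), (∀ x ∈ c :: l, v < x) →
    ∑ p ∈ range (l.length + 1),
      (if descCount (c :: l.insertIdx p v) = descCount (c :: l) then 1 else 0) =
    descCount (c :: l) := by
  intro l
  induction l with
  | nil =>
    intro c hc
    have h1 : v < c := hc c (by simp)
    rw [List.length_nil, Finset.sum_range_one, List.insertIdx_zero]
    have h2 : descCount (c :: [v]) = 1 := by
      rw [descCount_cons_cons, if_pos h1]; rfl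
    rw [if_neg (by rw [h2]; exact one_ne_zero)]; rfl
  | cons a t ih =>
    intro c hc
    have hav : ¬ (a < v) := not_lt.2 (hc a (by simp)).le
    have hcv : v < c := hc c (by simp)
    rw [List.length_cons, Finset.sum_range_succ']
    have e1 : ∀ q ∈ range (t.length + 1),
        (if descCount (c :: (a :: t).insertIdx (q+1) v) = descCount (c :: a :: t) then 1 else 0)
        = (if descCount (a :: t.insertIdx q v) = descCount (a :: t) then (1:ℕ) else 0) := by
      intro q _
      rw [List.insertIdx_succ_cons, descCount_cons_cons, descCount_cons_cons]
      by_cases h : descCount (a :: t.insertIdx q v) = descCount (a :: t)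
      · rw [if_pos h, if_pos (by rw [h])]
      · rw [if_neg h, if_neg (by intro hh; exact h (by omega))]
    rw [Finset.sum_congr rfl e1, ih a (fun x hx => hc x (by simp at hx ⊢; tauto))]
    have e0 : descCount (c :: (a :: t).insertIdx 0 v) = 1 + descCount (a :: t) := by
      rw [List.insertIdx_zero, descCount_cons_cons, descCount_cons_cons, if_pos hcv, if_neg hav]
      omega
    rw [e0, descCount_cons_cons]
    by_cases h : a < c <;> simp only [h, if_true, if_false] <;> first | omega | (split <;> omega)

theorem count_of_step (N d m : ℕ) (F : ℕ → ℕ)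
    (step : ∀ p < N, F p = d ∨ F p = d + 1)
    (keep : ∑ p ∈ range N, (if F p = d then 1 else 0) = m) (k : ℕ) :
    ∑ p ∈ range N, (if F p = k then 1 else 0) =
      if k = d then m else if k = d + 1 then N - m else 0 := by
  rcases eq_or_ne k d with rfl | hkd
  · simp [keep]
  rcases eq_or_ne k (d+1) with rfl | hkd1
  · have htot : ∑ p ∈ range N, ((if F p = d then 1 else 0) + (if F p = d+1 then (1:ℕ) else 0))
        = ∑ p ∈ range N, 1 := by
      refine Finset.sum_congr rfl fun p hp => ?_
      rcases step p (mem_range.1 hp) with h | h <;> simp [h]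
    rw [Finset.sum_add_distrib, keep] at htot
    simp only [Finset.sum_const, card_range, smul_eq_mul, mul_one] at htot
    rw [if_neg hkd, if_pos rfl]
    omega
  · rw [if_neg hkd, if_neg hkd1]
    refine Finset.sum_eq_zero fun p hp => ?_
    rcases step p (mem_range.1 hp) with h | h
    · rw [h, if_neg (Ne.symm hkd)]
    · rw [h, if_neg (Ne.symm hkd1)]

/-! ### Good lists -/

def Good (n : ℕ) (l : List ℤ) : Prop :=
  l.length = n ∧ (∀ x ∈ l, x ≠ 0 ∧ x.natAbs ≤ n) ∧ (l.map Int.natAbs).Nodup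

def gF : ℕ → Finset (List ℤ)
  | 0 => {[]}
  | (n+1) => ((gF n) ×ˢ (range (n+1)) ×ˢ ({1, -1} : Finset ℤ)).image
      fun x => x.1.insertIdx x.2.1 (x.2.2 * (n+1))

theorem ins_split {α : Type*} : ∀ (s t : List α) (a : α),
    (s ++ t).insertIdx s.length a = s ++ a :: t := by
  intro s
  induction s with
  | nil => intro t a; rfl
  | cons b s ih => intro t a; simp only [List.cons_append, List.length_cons,
      List.insertIdx_succ_cons, ih]

theorem mem_gF_iff : ∀ {n : ℕ} {l : List ℤ}, l ∈ gF n ↔ Good n l := by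
  intro n
  induction n with
  | zero =>
    intro l
    constructor
    · intro h
      simp only [gF, Finset.mem_singleton] at h
      subst h
      exact ⟨rfl, by simp, by simp⟩
    · intro ⟨h1, _, _⟩
      simp only [gF, Finset.mem_singleton]
      exact List.length_eq_zero_iff.1 h1
  | succ n ih =>
    intro l
    constructor
    · intro h
      simp only [gF, Finset.mem_image, Finset.mem_product, Finset.mem_range,
        Finset.mem_insert, Finset.mem_singleton] at h
      obtain ⟨x, hx, rfl⟩ := h
      obtain ⟨l', p, s⟩ := x
      obtain ⟨hl', hp, hs⟩ := hx
      simp only at hl' hp hs ⊢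
      obtain ⟨hlen, hbd, hnd⟩ := ih.1 hl'
      have hple : p ≤ l'.length := by omega
      have hperm : List.Perm (l'.insertIdx p (s * (n+1))) ((s * (n+1)) :: l') :=
        List.perm_insertIdx _ _ hple
      have hv : (s * ((n:ℤ)+1)).natAbs = n + 1 := by
        rcases hs with rfl | rfl <;> simp <;> omega
      refine ⟨?_, ?_, ?_⟩
      · rw [List.length_insertIdx_of_le_length hple, hlen]
      · intro x hx
        rcases List.mem_cons.1 ((hperm.mem_iff).1 hx) with h | h
        · subst h
          constructor
          · intro h0; rw [h0] at hv; simp at hv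
          · omega
        · exact ⟨(hbd x h).1, le_trans (hbd x h).2 (Nat.le_succ n)⟩
      · have : List.Perm ((l'.insertIdx p (s * (n+1))).map Int.natAbs)
            (((s * ((n:ℤ)+1)) :: l').map Int.natAbs) := hperm.map _
        rw [this.nodup_iff]
        simp only [List.map_cons, List.nodup_cons, hv]
        refine ⟨fun hmem => ?_, hnd⟩
        obtain ⟨x, hx, hx2⟩ := List.mem_map.1 hmem
        have := (hbd x hx).2
        omega
    · intro ⟨hlen, hbd, hnd⟩
      -- there is an entry with natAbs = n+1
      have hmem : (n+1) ∈ l.map Int.natAbs := by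
        have hsub : (l.map Int.natAbs).toFinset ⊆ Finset.Icc 1 (n+1) := by
          intro y hy
          obtain ⟨x, hx, rfl⟩ := List.mem_map.1 (List.mem_toFinset.1 hy)
          have := hbd x hx
          simp only [Finset.mem_Icc]
          omega
        have hcard : (Finset.Icc 1 (n+1)).card ≤ (l.map Int.natAbs).toFinset.card := by
          rw [List.toFinset_card_of_nodup hnd, List.length_map, hlen, Nat.card_Icc]
          omega
        have := Finset.eq_of_subset_of_card_le hsub hcard
        rw [← List.mem_toFinset, this]
        simp
      obtain ⟨x, hx, hxabs⟩ := List.mem_map.1 hmem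
      obtain ⟨s₀, t₀, rfl⟩ := List.append_of_mem hx
      have hx0 : x ≠ 0 := (hbd x hx).1
      have hpm : List.Perm ((s₀ ++ x :: t₀).map Int.natAbs)
          (x.natAbs :: (s₀ ++ t₀).map Int.natAbs) := by
        simpa using (List.perm_middle.map Int.natAbs)
      have hnd' : ((s₀ ++ t₀).map Int.natAbs).Nodup ∧
          x.natAbs ∉ (s₀ ++ t₀).map Int.natAbs := by
        have := hpm.nodup_iff.1 hnd
        simp only [List.nodup_cons] at this
        exact ⟨this.2, this.1⟩
      have hlen' : (s₀ ++ t₀).length = n := by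
        simp only [List.length_append, List.length_cons] at hlen ⊢
        omega
      have hbd' : ∀ y ∈ s₀ ++ t₀, y ≠ 0 ∧ y.natAbs ≤ n := by
        intro y hy
        have hyl : y ∈ s₀ ++ x :: t₀ := by
          simp only [List.mem_append, List.mem_cons] at hy ⊢; tauto
        refine ⟨(hbd y hyl).1, ?_⟩
        have h1 := (hbd y hyl).2
        rcases Nat.lt_or_ge y.natAbs (n+1) with h | h
        · omega
        · exfalso
          have : y.natAbs = n + 1 := by omega
          refine hnd'.2 ?_
          rw [show x.natAbs = y.natAbs by omega]
          exact List.mem_map_of_mem hy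
      simp only [gF, Finset.mem_image, Finset.mem_product, Finset.mem_range,
        Finset.mem_insert, Finset.mem_singleton]
      have hsgn : x = 1 * ((n:ℤ)+1) ∨ x = -1 * ((n:ℤ)+1) := by
        rcases Int.natAbs_eq x with h | h <;> [left; right] <;> omega
      refine ⟨⟨s₀ ++ t₀, s₀.length, if x = 1 * ((n:ℤ)+1) then 1 else -1⟩,
        ⟨ih.2 ⟨hlen', hbd', hnd'.1⟩, ?_, ?_⟩, ?_⟩
      · show s₀.length < n + 1
        simp only [List.length_append] at hlen'; omega
      · split <;> simp
      · have : (if x = 1 * ((n:ℤ)+1) then (1:ℤ) else -1) * (n+1) = x := by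
          split
          · omega
          · rcases hsgn with h | h
            · tauto
            · omega
        rw [this, ins_split]

theorem smallStep (v : ℤ) : ∀ (l : List ℤ) (c : ℤ), (∀ x ∈ c :: l, v < x) → ∀ p : ℕ,
    descCount (c :: l.insertIdx p v) = descCount (c :: l) ∨
    descCount (c :: l.insertIdx p v) = descCount (c :: l) + 1 := by
  intro l
  induction l with
  | nil =>
    intro c hc p
    match p with
    | 0 =>
      right
      rw [List.insertIdx_zero, descCount_cons_cons]
      have : v < c := hc c (by simp)
      rw [if_pos this]; rfl
    | (q+1) => left; rw [List.insertIdx_succ_nil]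
  | cons a t ih =>
    intro c hc p
    match p with
    | 0 =>
      rw [List.insertIdx_zero, descCount_cons_cons, descCount_cons_cons, descCount_cons_cons]
      have hav : ¬ (a < v) := not_lt.2 (hc a (by simp)).le
      have hcv : v < c := hc c (by simp)
      rw [if_neg hav, if_pos hcv]
      split <;> omega
    | (q+1) =>
      rw [List.insertIdx_succ_cons, descCount_cons_cons, descCount_cons_cons]
      rcases ih a (fun x hx => hc x (by simp at hx ⊢; tauto)) q with h | h <;> rw [h]
      · left; rfl
      · right; omega

theorem takeWhile_len (v : ℤ) (pred : ℤ → Bool) (hv : pred v = false) :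
    ∀ (l : List ℤ) (p : ℕ), p ≤ l.length → (∀ x ∈ l, pred x = true) →
    ((l.insertIdx p v).takeWhile pred).length = p := by
  intro l
  induction l with
  | nil =>
    intro p hp _
    obtain rfl : p = 0 := Nat.le_zero.1 hp
    rw [List.insertIdx_zero, List.takeWhile_cons_of_neg (by rw [hv]; simp), List.length_nil]
  | cons a t ih =>
    intro p hp hall
    match p with
    | 0 =>
      rw [List.insertIdx_zero, List.takeWhile_cons_of_neg (by rw [hv]; simp), List.length_nil]
    | (q+1) =>
      rw [List.insertIdx_succ_cons,
        List.takeWhile_cons_of_pos (hall a (by simp)), List.length_cons,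
        ih q (by simpa using hp) (fun x hx => hall x (by simp [hx]))]

theorem enc_injOn (n : ℕ) :
    Set.InjOn (fun x : List ℤ × ℕ × ℤ => x.1.insertIdx x.2.1 (x.2.2 * (n+1)))
      ((gF n ×ˢ Finset.range (n+1) ×ˢ ({1, -1} : Finset ℤ)) : Finset (List ℤ × ℕ × ℤ)) := by
  rintro ⟨l1, p1, s1⟩ h1 ⟨l2, p2, s2⟩ h2 heq
  simp only [Finset.coe_product, Set.mem_prod, Finset.mem_coe, Finset.mem_range,
    Finset.mem_insert, Finset.mem_singleton] at h1 h2
  obtain ⟨hl1, hp1, hs1⟩ := h1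
  obtain ⟨hl2, hp2, hs2⟩ := h2
  obtain ⟨hlen1, hbd1, -⟩ := mem_gF_iff.1 hl1
  obtain ⟨hlen2, hbd2, -⟩ := mem_gF_iff.1 hl2
  simp only at heq
  have hple1 : p1 ≤ l1.length := by omega
  have hple2 : p2 ≤ l2.length := by omega
  set pred : ℤ → Bool := fun x => decide (x.natAbs ≤ n) with hpred
  have hv1 : pred (s1 * (n+1)) = false := by
    rcases hs1 with rfl | rfl <;> simp [hpred] <;> omega
  have hv2 : pred (s2 * (n+1)) = false := by
    rcases hs2 with rfl | rfl <;> simp [hpred] <;> omega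
  have hall1 : ∀ x ∈ l1, pred x = true := fun x hx => by
    simp [hpred]; exact (hbd1 x hx).2
  have hall2 : ∀ x ∈ l2, pred x = true := fun x hx => by
    simp [hpred]; exact (hbd2 x hx).2
  have hpp : p1 = p2 := by
    have e1 := takeWhile_len _ pred hv1 l1 p1 hple1 hall1
    have e2 := takeWhile_len _ pred hv2 l2 p2 hple2 hall2
    rw [← e1, ← e2, heq]
  subst hpp
  have hvv : s1 * ((n:ℤ)+1) = s2 * ((n:ℤ)+1) := by
    have e1 := List.getElem_insertIdx_self (l := l1) (x := s1 * (n+1)) (i := p1) (by rw [List.length_insertIdx_of_le_length hple1]; omega)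
    have e2 := List.getElem_insertIdx_self (l := l2) (x := s2 * (n+1)) (i := p1) (by rw [List.length_insertIdx_of_le_length hple2]; omega)
    rw [← e1, ← e2]
    congr 1
  have hss : s1 = s2 := by
    have : ((n:ℤ)+1) ≠ 0 := by positivity
    exact mul_right_cancel₀ this hvv
  have hll : l1 = l2 := by
    have e1 := List.eraseIdx_insertIdx_self (i := p1) (l := l1) (s1 * ((n:ℤ)+1))
    have e2 := List.eraseIdx_insertIdx_self (i := p1) (l := l2) (s2 * ((n:ℤ)+1))
    rw [← e1, ← e2, heq]
  simp [hss, hll]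

def negs (l : List ℤ) : ℕ := l.countP (fun x => decide (x < 0))

theorem negs_insertIdx (l : List ℤ) (p : ℕ) (v : ℤ) (h : p ≤ l.length) :
    negs (l.insertIdx p v) = negs l + if v < 0 then 1 else 0 := by
  unfold negs
  rw [(List.perm_insertIdx v l h).countP_eq, List.countP_cons]
  simp

theorem card_filter_eq_sum {α : Type*} (s : Finset α) (p : α → Prop) [DecidablePred p] :
    (s.filter p).card = ∑ a ∈ s, if p a then 1 else 0 := by
  simpa using (Finset.natCast_card_filter (β := ℕ) p s).symm

def NN (n k : ℕ) (b : Bool) : ℕ :=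
  ((gF n).filter fun l => descCount ((0:ℤ) :: l) = k ∧ decide (negs l % 2 = 1) = b).card

theorem bigTerm (n k : ℕ) (b : Bool) (l : List ℤ) (hl : l ∈ gF n) :
    (∑ p ∈ range (n+1), if (descCount ((0:ℤ) :: l.insertIdx p (1 * ((n:ℤ)+1))) = k ∧
        decide (negs (l.insertIdx p (1 * ((n:ℤ)+1))) % 2 = 1) = b) then 1 else 0)
    = if decide (negs l % 2 = 1) = b then
        (if k = descCount ((0:ℤ) :: l) then descCount ((0:ℤ) :: l) + 1
         else if k = descCount ((0:ℤ) :: l) + 1 then (n+1) - (descCount ((0:ℤ) :: l) + 1)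
         else 0)
      else 0 := by
  obtain ⟨hlen, hbd, -⟩ := mem_gF_iff.1 hl
  have hbig : ∀ x ∈ (0:ℤ) :: l, x < 1 * ((n:ℤ)+1) := by
    intro x hx
    rcases List.mem_cons.1 hx with rfl | hx
    · simp only [one_mul]; positivity
    · have := (hbd x hx).2; omega
  have hstep : ∀ p ∈ range (n+1),
      (if (descCount ((0:ℤ) :: l.insertIdx p (1 * ((n:ℤ)+1))) = k ∧
          decide (negs (l.insertIdx p (1 * ((n:ℤ)+1))) % 2 = 1) = b) then 1 else 0)
      = (if decide (negs l % 2 = 1) = b then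
          (if descCount ((0:ℤ) :: l.insertIdx p (1 * ((n:ℤ)+1))) = k then (1:ℕ) else 0) else 0) := by
    intro p hp
    have hple : p ≤ l.length := by rw [hlen]; exact Nat.lt_succ_iff.1 (mem_range.1 hp)
    rw [negs_insertIdx l p _ hple, if_neg (by simp only [one_mul]; omega : ¬ (1 * ((n:ℤ)+1) < 0)), add_zero]
    by_cases hC : decide (negs l % 2 = 1) = b
    · simp only [hC, and_true, if_true]
    · simp only [hC, and_false, if_false]
  rw [Finset.sum_congr rfl hstep]
  by_cases hC : decide (negs l % 2 = 1) = b
  · simp only [hC, if_true]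
    have := count_of_step (n+1) (descCount ((0:ℤ) :: l)) (descCount ((0:ℤ) :: l) + 1)
      (fun p => descCount ((0:ℤ) :: l.insertIdx p (1 * ((n:ℤ)+1))))
      (fun p _ => bigStep _ l 0 hbig p)
      (by have := bigKeep (1 * ((n:ℤ)+1)) l 0 hbig; rwa [hlen] at this) k
    exact this
  · simp only [hC, if_false]
    exact Finset.sum_eq_zero fun p _ => rfl

theorem smallTerm (n k : ℕ) (b : Bool) (l : List ℤ) (hl : l ∈ gF n) :
    (∑ p ∈ range (n+1), if (descCount ((0:ℤ) :: l.insertIdx p (-1 * ((n:ℤ)+1))) = k ∧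
        decide (negs (l.insertIdx p (-1 * ((n:ℤ)+1))) % 2 = 1) = b) then 1 else 0)
    = if (!decide (negs l % 2 = 1)) = b then
        (if k = descCount ((0:ℤ) :: l) then descCount ((0:ℤ) :: l)
         else if k = descCount ((0:ℤ) :: l) + 1 then (n+1) - descCount ((0:ℤ) :: l)
         else 0)
      else 0 := by
  obtain ⟨hlen, hbd, -⟩ := mem_gF_iff.1 hl
  have hsmall : ∀ x ∈ (0:ℤ) :: l, -1 * ((n:ℤ)+1) < x := by
    intro x hx
    rcases List.mem_cons.1 hx with rfl | hx
    · simp only [neg_mul, one_mul]; omega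
    · have := (hbd x hx).2; omega
  have hflip : ∀ m : ℕ, decide ((m + 1) % 2 = 1) = !decide (m % 2 = 1) := by
    intro m
    by_cases h : m % 2 = 1 <;> simp [h] <;> omega
  have hstep : ∀ p ∈ range (n+1),
      (if (descCount ((0:ℤ) :: l.insertIdx p (-1 * ((n:ℤ)+1))) = k ∧
          decide (negs (l.insertIdx p (-1 * ((n:ℤ)+1))) % 2 = 1) = b) then 1 else 0)
      = (if (!decide (negs l % 2 = 1)) = b then
          (if descCount ((0:ℤ) :: l.insertIdx p (-1 * ((n:ℤ)+1))) = k then (1:ℕ) else 0) else 0) := by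
    intro p hp
    have hple : p ≤ l.length := by rw [hlen]; exact Nat.lt_succ_iff.1 (mem_range.1 hp)
    rw [negs_insertIdx l p _ hple, if_pos (by push_cast; omega : (-1 * ((n:ℤ)+1) < 0)), hflip]
    by_cases hC : (!decide (negs l % 2 = 1)) = b
    · simp only [hC, and_true, if_true]
    · simp only [hC, and_false, if_false]
  rw [Finset.sum_congr rfl hstep]
  by_cases hC : (!decide (negs l % 2 = 1)) = b
  · simp only [hC, if_true]
    have := count_of_step (n+1) (descCount ((0:ℤ) :: l)) (descCount ((0:ℤ) :: l))
      (fun p => descCount ((0:ℤ) :: l.insertIdx p (-1 * ((n:ℤ)+1))))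
      (fun p _ => smallStep _ l 0 hsmall p)
      (by have := smallKeep (-1 * ((n:ℤ)+1)) l 0 hsmall; rwa [hlen] at this) k
    exact this
  · simp only [hC, if_false]
    exact Finset.sum_eq_zero fun p _ => rfl

theorem NN_succ (n k : ℕ) (b : Bool) :
    NN (n+1) k b = ∑ l ∈ gF n,
      ((if decide (negs l % 2 = 1) = b then
          (if k = descCount ((0:ℤ) :: l) then descCount ((0:ℤ) :: l) + 1
           else if k = descCount ((0:ℤ) :: l) + 1 then (n+1) - (descCount ((0:ℤ) :: l) + 1)
           else 0)
        else 0) +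
       (if (!decide (negs l % 2 = 1)) = b then
          (if k = descCount ((0:ℤ) :: l) then descCount ((0:ℤ) :: l)
           else if k = descCount ((0:ℤ) :: l) + 1 then (n+1) - descCount ((0:ℤ) :: l)
           else 0)
        else 0)) := by
  have hgf : gF (n+1) = ((gF n ×ˢ Finset.range (n+1) ×ˢ ({1, -1} : Finset ℤ)).image
      fun x => x.1.insertIdx x.2.1 (x.2.2 * (n+1))) := rfl
  unfold NN
  rw [hgf, Finset.filter_image, Finset.card_image_of_injOn
    ((enc_injOn n).mono (by exact_mod_cast Finset.filter_subset _ _)),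
    card_filter_eq_sum, Finset.sum_product]
  refine Finset.sum_congr rfl fun l hl => ?_
  rw [Finset.sum_product, ← bigTerm n k b l hl, ← smallTerm n k b l hl,
    ← Finset.sum_add_distrib]
  refine Finset.sum_congr rfl fun p hp => ?_
  rw [Finset.sum_pair (by norm_num : (1:ℤ) ≠ -1)]

theorem NN_base (k : ℕ) (b : Bool) : NN 0 k b = if k = 0 ∧ b = false then 1 else 0 := by
  unfold NN
  show ((({[]} : Finset (List ℤ))).filter _).card = _
  rw [Finset.filter_singleton]
  have h1 : descCount ((0:ℤ) :: ([]:List ℤ)) = 0 := rfl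
  have h2 : negs ([]:List ℤ) = 0 := rfl
  by_cases hk : k = 0
  · subst hk
    by_cases hb : b = false
    · subst hb; simp [h1, h2]
    · have hb' : b = true := by revert hb; cases b <;> simp
      subst hb'; simp [h1, h2]
  · simp [h1, h2, hk, Ne.symm hk]

theorem NN_big (n k : ℕ) (b : Bool) (h : n < k) : NN n k b = 0 := by
  unfold NN
  rw [Finset.card_eq_zero, Finset.filter_eq_empty_iff]
  intro l hl
  obtain ⟨hlen, -, -⟩ := mem_gF_iff.1 hl
  have := descCount_cons_le (0:ℤ) l
  rw [hlen] at this
  rintro ⟨h1, -⟩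
  omega

theorem master (n k : ℕ) (b : Bool) (hk : 1 ≤ k) :
    NN (n+1) k b = (k+1) * NN n k b + k * NN n k (!b)
      + ((n+1) - k) * NN n (k-1) b + ((n+2) - k) * NN n (k-1) (!b) := by
  rw [NN_succ]
  unfold NN
  rw [card_filter_eq_sum, card_filter_eq_sum, card_filter_eq_sum, card_filter_eq_sum,
    Finset.mul_sum, Finset.mul_sum, Finset.mul_sum, Finset.mul_sum,
    ← Finset.sum_add_distrib, ← Finset.sum_add_distrib, ← Finset.sum_add_distrib]
  refine Finset.sum_congr rfl fun l hl => ?_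
  obtain ⟨hlen, -, -⟩ := mem_gF_iff.1 hl
  have hd : descCount ((0:ℤ)::l) ≤ n := hlen ▸ descCount_cons_le 0 l
  cases b <;> cases hP : decide (negs l % 2 = 1) <;>
    simp only [hP, Bool.not_true, Bool.not_false] <;> simp <;> split_ifs <;> omega

theorem master0 (n : ℕ) (b : Bool) : NN (n+1) 0 b = NN n 0 b := by
  rw [NN_succ]
  unfold NN
  rw [card_filter_eq_sum]
  refine Finset.sum_congr rfl fun l hl => ?_
  cases b <;> cases hP : decide (negs l % 2 = 1) <;>
    simp only [hP, Bool.not_true, Bool.not_false] <;> simp <;>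
      first | omega | (split_ifs <;> omega)

theorem NN_zero_true : ∀ n, NN n 0 true = 0 := by
  intro n
  induction n with
  | zero => simp [NN_base]
  | succ m ih => rw [master0, ih]

theorem NN_diag : ∀ n, NN n n true = (if Even n then 0 else 1) ∧
    NN n n false = (if Even n then 1 else 0) := by
  intro n
  induction n with
  | zero => simp [NN_base]
  | succ m ih =>
    have step : ∀ b, NN (m+1) (m+1) b = NN m m (!b) := by
      intro b
      rw [master m (m+1) b (by omega), NN_big m (m+1) b (by omega),
        NN_big m (m+1) (!b) (by omega)]
      simp
    constructor
    · rw [step, Bool.not_true, ih.2]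
      by_cases h : Even m <;> simp [h, Nat.even_add_one]
    · rw [step, Bool.not_false, ih.1]
      by_cases h : Even m <;> simp [h, Nat.even_add_one]

theorem countP_ofFn {n : ℕ} (f : Fin n → ℤ) (pr : ℤ → Bool) :
    (List.ofFn f).countP pr = (Finset.univ.filter fun i => pr (f i) = true).card := by
  induction n with
  | zero => simp
  | succ m ih =>
    rw [List.ofFn_succ, List.countP_cons, ih, card_filter_eq_sum, card_filter_eq_sum,
      Fin.sum_univ_succ]
    by_cases h : pr (f 0) = true <;> simp [h] <;> omega

theorem signed_zero {n : ℕ} {σ : Equiv.Perm (BSet n)} (h : IsSigned σ) :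
    σ ⟨0, by simp⟩ = ⟨0, by simp⟩ := by
  have h2 := h ⟨0, by simp⟩
  have hneg : negB (⟨0, by simp⟩ : BSet n) = ⟨0, by simp⟩ := Subtype.ext (by simp [negB])
  rw [hneg] at h2
  apply Subtype.ext
  show (σ _).1 = 0
  omega

theorem signed_ext {n : ℕ} {σ σ' : Equiv.Perm (BSet n)} (h1 : IsSigned σ) (h2 : IsSigned σ')
    (h : ∀ i : Fin n, σ (posB i) = σ' (posB i)) : σ = σ' := by
  have key : ∀ x : BSet n, 0 < x.1 → σ x = σ' x := by
    intro x hx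
    have hb := x.2
    simp only [Finset.mem_Icc] at hb
    have hlt : x.1.natAbs - 1 < n := by omega
    have hxe : x = posB ⟨x.1.natAbs - 1, hlt⟩ := by
      apply Subtype.ext
      simp only [posB]
      omega
    rw [hxe]; exact h _
  apply Equiv.ext
  intro x
  rcases lt_trichotomy x.1 0 with hx | hx | hx
  · have hxe : x = negB (negB x) := Subtype.ext (by simp [negB])
    rw [hxe]
    apply Subtype.ext
    rw [h1 (negB x), h2 (negB x), key (negB x) (by simp [negB]; omega)]
  · have hxe : x = ⟨0, by simp⟩ := Subtype.ext hx
    rw [hxe, signed_zero h1, signed_zero h2]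
  · exact key x hx

theorem mkPerm (n : ℕ) (l : List ℤ) (hlen : l.length = n)
    (hbd : ∀ x ∈ l, x ≠ 0 ∧ x.natAbs ≤ n) (hnd : (l.map Int.natAbs).Nodup) :
    ∃ σ : Equiv.Perm (BSet n), IsSigned σ ∧
      (List.ofFn fun i : Fin n => (σ (posB i)).1) = l := by
  have hidx : ∀ x : BSet n, x.1 ≠ 0 → x.1.natAbs - 1 < l.length := by
    intro x hx
    have := x.2
    simp only [Finset.mem_Icc] at this
    omega
  have hbd' : ∀ (i : ℕ) (hi : i < l.length), (l[i]'hi) ≠ 0 ∧ (l[i]'hi).natAbs ≤ n :=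
    fun i hi => hbd _ (List.getElem_mem hi)
  have hmem : ∀ (i : ℕ) (hi : i < l.length) (s : Bool),
      (if s then (l[i]'hi) else -(l[i]'hi)) ∈ Finset.Icc (-(n:ℤ)) (n:ℤ) := by
    intro i hi s
    have := hbd' i hi
    simp only [Finset.mem_Icc]
    cases s <;> simp <;> omega
  set f : BSet n → BSet n := fun x =>
    if hx : x.1 = 0 then ⟨0, by simp⟩
    else if hpos : 0 < x.1 then ⟨l[x.1.natAbs - 1]'(hidx x hx), by simpa using hmem _ _ true⟩
    else ⟨-(l[x.1.natAbs - 1]'(hidx x hx)), by simpa using hmem _ _ false⟩ with hf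
  have habs : ∀ (i j : ℕ) (hi : i < l.length) (hj : j < l.length),
      (l[i]'hi).natAbs = (l[j]'hj).natAbs → i = j := by
    intro i j hi hj hij
    have hi' : i < (l.map Int.natAbs).length := by simpa using hi
    have hj' : j < (l.map Int.natAbs).length := by simpa using hj
    refine (List.Nodup.getElem_inj_iff hnd (hi := hi') (hj := hj')).1 ?_
    simpa using hij
  have hfzero : ∀ (x : BSet n), x.1 = 0 → (f x).1 = 0 := by
    intro x hx; simp [hf, hx]
  have hfpos : ∀ (x : BSet n) (hx : x.1 ≠ 0), 0 < x.1 →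
      (f x).1 = l[x.1.natAbs - 1]'(hidx x hx) := by
    intro x hx hp; simp [hf, hx, hp]
  have hfneg : ∀ (x : BSet n) (hx : x.1 ≠ 0), ¬ (0 < x.1) →
      (f x).1 = -(l[x.1.natAbs - 1]'(hidx x hx)) := by
    intro x hx hp; simp [hf, hx, hp]
  have hgeq : ∀ (a b : ℕ) (ha : a < l.length) (hb : b < l.length), a = b →
      l[a]'ha = l[b]'hb := by
    intro a b ha hb h
    subst h
    rfl
  have hinj : Function.Injective f := by
    intro x y hxy
    have hval : (f x).1 = (f y).1 := congrArg Subtype.val hxy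
    by_cases hx : x.1 = 0 <;> by_cases hy : y.1 = 0
    · exact Subtype.ext (by rw [hx, hy])
    · exfalso
      rw [hfzero x hx] at hval
      by_cases hpy : 0 < y.1
      · rw [hfpos y hy hpy] at hval
        exact (hbd' _ (hidx y hy)).1 hval.symm
      · rw [hfneg y hy hpy] at hval
        exact (hbd' _ (hidx y hy)).1 (by omega)
    · exfalso
      rw [hfzero y hy] at hval
      by_cases hpx : 0 < x.1
      · rw [hfpos x hx hpx] at hval
        exact (hbd' _ (hidx x hx)).1 hval
      · rw [hfneg x hx hpx] at hval
        exact (hbd' _ (hidx x hx)).1 (by omega)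
    · by_cases hpx : 0 < x.1 <;> by_cases hpy : 0 < y.1
      · rw [hfpos x hx hpx, hfpos y hy hpy] at hval
        have hidxeq := habs _ _ (hidx x hx) (hidx y hy) (by rw [hval])
        exact Subtype.ext (by omega)
      · rw [hfpos x hx hpx, hfneg y hy hpy] at hval
        have hidxeq := habs _ _ (hidx x hx) (hidx y hy) (by omega)
        have := hgeq _ _ (hidx x hx) (hidx y hy) hidxeq
        have h0 := (hbd' _ (hidx x hx)).1
        exfalso
        omega
      · rw [hfneg x hx hpx, hfpos y hy hpy] at hval
        have hidxeq := habs _ _ (hidx x hx) (hidx y hy) (by omega)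
        have := hgeq _ _ (hidx x hx) (hidx y hy) hidxeq
        have h0 := (hbd' _ (hidx x hx)).1
        exfalso
        omega
      · rw [hfneg x hx hpx, hfneg y hy hpy] at hval
        have hidxeq := habs _ _ (hidx x hx) (hidx y hy) (by omega)
        have := hgeq _ _ (hidx x hx) (hidx y hy) hidxeq
        exact Subtype.ext (by omega)
  refine ⟨Equiv.ofBijective f ((Finite.injective_iff_bijective).1 hinj), ?_, ?_⟩
  · intro x
    show (f (negB x)).1 = -((f x).1)
    have hnx : (negB x).1 = -x.1 := rfl
    by_cases hx : x.1 = 0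
    · rw [hfzero x hx, hfzero (negB x) (by rw [hnx, hx]; ring)]
      ring
    · by_cases hpx : 0 < x.1
      · have hnx0 : (negB x).1 ≠ 0 := by rw [hnx]; omega
        rw [hfpos x hx hpx, hfneg (negB x) hnx0 (by rw [hnx]; omega),
          hgeq _ _ (hidx (negB x) hnx0) (hidx x hx) (by rw [hnx]; omega)]
      · have hnx0 : (negB x).1 ≠ 0 := by rw [hnx]; omega
        rw [hfneg x hx hpx, hfpos (negB x) hnx0 (by rw [hnx]; omega),
          hgeq _ _ (hidx (negB x) hnx0) (hidx x hx) (by rw [hnx]; omega)]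
        ring
  · refine List.ext_getElem (by simp [hlen]) ?_
    intro i h1 h2
    rw [List.getElem_ofFn]
    show (f (posB _)).1 = l[i]'h2
    have hpval : (posB (⟨i, by simpa [hlen] using h1⟩ : Fin n)).1 = (i : ℤ) + 1 := rfl
    have hp0 : (posB (⟨i, by simpa [hlen] using h1⟩ : Fin n)).1 ≠ 0 := by rw [hpval]; omega
    rw [hfpos _ hp0 (by rw [hpval]; omega)]
    exact hgeq _ _ _ _ (by rw [hpval]; omega)

theorem Dt_eq_NN (n k : ℕ) :
    Fintype.card {σ : Equiv.Perm (BSet n) //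
      (IsSigned σ ∧ ¬ Even (negCount σ)) ∧ descB σ = k} = NN n k true := by
  rw [Fintype.card_subtype]
  unfold NN
  refine Finset.card_bij (fun σ _ => List.ofFn fun i : Fin n => (σ (posB i)).1) ?_ ?_ ?_
  · intro σ hσ
    rw [Finset.mem_filter] at hσ
    obtain ⟨-, ⟨hsig, hodd⟩, hdesc⟩ := hσ
    have hcnt : negs (List.ofFn fun i : Fin n => (σ (posB i)).1) = negCount σ := by
      unfold negs negCount
      rw [countP_ofFn]
      congr 1
      ext i
      simp
    rw [Finset.mem_filter]
    refine ⟨mem_gF_iff.2 ⟨by simp, ?_, ?_⟩, hdesc, ?_⟩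
    · intro x hx
      rw [List.mem_ofFn] at hx
      obtain ⟨i, rfl⟩ := hx
      show (σ (posB i)).1 ≠ 0 ∧ (σ (posB i)).1.natAbs ≤ n
      have hb := (σ (posB i)).2
      simp only [Finset.mem_Icc] at hb
      refine ⟨?_, by omega⟩
      intro h0
      have : σ (posB i) = σ ⟨0, by simp⟩ := by
        rw [signed_zero hsig]
        exact Subtype.ext h0
      have hpeq := σ.injective this
      have : (posB i).1 = (0 : ℤ) := by rw [hpeq]
      simp only [posB] at this
      omega
    · rw [List.map_ofFn, List.nodup_ofFn]
      intro i j hij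
      simp only [Function.comp] at hij
      rcases Int.natAbs_eq_natAbs_iff.1 hij with he | he
      · have := σ.injective (Subtype.ext he)
        simpa [posB, Fin.ext_iff] using congrArg (fun z => z.1) this
      · exfalso
        have : σ (posB i) = σ (negB (posB j)) := by
          apply Subtype.ext
          rw [hsig (posB j)]
          exact he
        have hpe := σ.injective this
        have : (posB i).1 = (negB (posB j)).1 := by rw [hpe]
        simp only [posB, negB] at this
        omega
    · rw [hcnt]
      simp only [decide_eq_true_eq]
      exact Nat.not_even_iff.1 hodd

  · intro σ1 h1 σ2 h2 heq
    rw [Finset.mem_filter] at h1 h2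
    have hfe := List.ofFn_inj.1 heq
    exact signed_ext h1.2.1.1 h2.2.1.1 fun i => Subtype.ext (congrFun hfe i)
  · intro l hl
    rw [Finset.mem_filter] at hl
    obtain ⟨hg, hdesc, hpar⟩ := hl
    obtain ⟨hlen, hbd, hnd⟩ := mem_gF_iff.1 hg
    obtain ⟨σ, hsig, hofn⟩ := mkPerm n l hlen hbd hnd
    have hcnt : negs l = negCount σ := by
      rw [← hofn]
      unfold negs negCount
      rw [countP_ofFn]
      congr 1
      ext i
      simp
    refine ⟨σ, ?_, hofn⟩
    rw [Finset.mem_filter]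
    refine ⟨Finset.mem_univ _, ⟨hsig, ?_⟩, ?_⟩
    · rw [← hcnt]
      simp only [decide_eq_true_eq] at hpar
      exact Nat.not_even_iff.2 hpar
    · show descCount ((0:ℤ) :: List.ofFn fun i : Fin n => (σ (posB i)).1) = k
      rw [hofn]
      exact hdesc

theorem EE : ∀ n k : ℕ, (NN n k false : ℤ) - NN n k true = (-1)^k * (n.choose k : ℤ) := by
  intro n
  induction n with
  | zero =>
    intro k
    rcases Nat.eq_zero_or_pos k with rfl | hk
    · simp [NN_base]
    · rw [NN_base, NN_base, Nat.choose_eq_zero_of_lt hk]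
      have : ¬ (k = 0) := by omega
      simp [this]
  | succ m ih =>
    intro k
    rcases Nat.eq_zero_or_pos k with rfl | hk
    · rw [master0, master0]
      simpa using ih 0
    rcases le_or_gt k (m+1) with hk2 | hk2
    · obtain ⟨j, rfl⟩ : ∃ j, k = j + 1 := ⟨k - 1, by omega⟩
      rw [master m (j+1) false (by omega), master m (j+1) true (by omega)]
      simp only [Bool.not_false, Bool.not_true]
      have c1 : ((m - j : ℕ) : ℤ) = (m : ℤ) - j := by
        rw [Nat.cast_sub (by omega)]
      have c2 : ((m + 1 - j : ℕ) : ℤ) = (m : ℤ) + 1 - j := by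
        rw [Nat.cast_sub (by omega)]; push_cast; ring
      have hih1 := ih (j+1)
      have hih0 := ih j
      rw [Nat.choose_succ_succ]
      push_cast
      rw [c1, c2]
      linear_combination hih1 - hih0
    · rw [NN_big _ _ _ hk2, NN_big _ _ _ hk2, Nat.choose_eq_zero_of_lt hk2]
      simp

theorem final_rec (m k : ℕ) (hk : 0 < k) (hkm : k ≤ m) :
    (NN (m+1) k true : ℤ) = (2 * (k : ℤ) + 1) * NN m k true
      + (2 * ((m:ℤ)+1) - 2 * (k : ℤ) + 1) * NN m (k-1) true
      - (-1) ^ k * (m.choose (k - 1) : ℤ) := by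
  obtain ⟨j, rfl⟩ : ∃ j, k = j + 1 := ⟨k - 1, by omega⟩
  rw [master m (j+1) true (by omega)]
  simp only [Bool.not_true, Nat.add_sub_cancel]
  have c1 : ((m - j : ℕ) : ℤ) = (m : ℤ) - j := by
    rw [Nat.cast_sub (by omega)]
  have c2 : ((m + 1 - j : ℕ) : ℤ) = (m : ℤ) + 1 - j := by
    rw [Nat.cast_sub (by omega)]; push_cast; ring
  have hEE1 := EE m (j+1)
  have hEE0 := EE m j
  have hch : (m.choose (j+1) : ℤ) * (j+1) = (m.choose j : ℤ) * ((m:ℤ) - j) := by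
    have := Nat.choose_succ_right_eq m j
    have hc : ((m - j : ℕ) : ℤ) = (m : ℤ) - j := by
      rw [Nat.cast_sub (by omega)]
    calc (m.choose (j+1) : ℤ) * (j+1) = ((m.choose (j+1) * (j+1) : ℕ) : ℤ) := by push_cast; ring
    _ = ((m.choose j * (m - j) : ℕ) : ℤ) := by rw [this]
    _ = (m.choose j : ℤ) * ((m:ℤ) - j) := by push_cast [hc]; ring
  push_cast
  rw [c1, c2]
  linear_combination ((j:ℤ)+1) * hEE1 + ((m:ℤ)+1-j) * hEE0 + (-1)^(j+1) * hch


theorem Dt_NN (n k : ℕ) : eulerianDt n k = NN n k true := Dt_eq_NN n k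

theorem stmt11 :
    (∀ n : ℕ, eulerianDt n 0 = 0) ∧
    (∀ n : ℕ, 2 * (eulerianDt n n : ℤ) = 1 - (-1) ^ n) ∧
    (∀ n k : ℕ, 0 < k → k < n →
      (eulerianDt n k : ℤ) = (2 * (k : ℤ) + 1) * eulerianDt (n - 1) k
        + (2 * (n : ℤ) - 2 * (k : ℤ) + 1) * eulerianDt (n - 1) (k - 1)
        - (-1) ^ k * ((n - 1).choose (k - 1) : ℤ)) := by
  refine ⟨?_, ?_, ?_⟩
  · intro n
    rw [Dt_NN, NN_zero_true]
  · intro n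
    rw [Dt_NN, (NN_diag n).1]
    by_cases h : Even n
    · rw [if_pos h, h.neg_one_pow]
      norm_num
    · rw [if_neg h, (Nat.not_even_iff_odd.1 h).neg_one_pow]
      norm_num
  · intro n k hk hkn
    obtain ⟨m, rfl⟩ : ∃ m, n = m + 1 := ⟨n - 1, by omega⟩
    simp only [Nat.add_sub_cancel]
    rw [Dt_NN, Dt_NN, Dt_NN]
    have := final_rec m k hk (by omega)
    push_cast at this ⊢
    linarith
end

section
/- Worpitzky-type identity of type D (primary triangle): for every n ≥ 0 and every real x, 2·Σ_{k=0}^{n} C(x+k, n)·D(n,k) = (2x+1)^n + (−1)^n, where C(y,n) = (y·(y−1)⋯(y−n+1))/n! is the generalized binomial coefficient. -/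
open MeasureTheory Finset

/-- Generalized binomial coefficient C(y, n) = y(y−1)⋯(y−n+1)/n!. -/
noncomputable def genChoose (y : ℝ) (n : ℕ) : ℝ :=
  (∏ i ∈ Finset.range n, (y - i)) / n.factorial

namespace AuxD

lemma descCount_cons_le (a : ℤ) (l : List ℤ) : descCount (a :: l) ≤ l.length := by
  induction l generalizing a with
  | nil => simp [descCount]
  | cons b t ih =>
    simp only [descCount, List.length_cons]
    have := ih b
    split <;> omega

lemma descCount_cons_eq_sum (a : ℤ) (l : List ℤ) :
    descCount (a :: l) =
      ∑ i ∈ Finset.range l.length, if l.getD i 0 < (a :: l).getD i 0 then 1 else 0 := by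
  induction l generalizing a with
  | nil => simp [descCount]
  | cons b t ih =>
    rw [List.length_cons, Finset.sum_range_succ']
    simp only [descCount, List.getD_cons_succ, List.getD_cons_zero]
    rw [ih b]
    omega

lemma descCount_insert_big (a x : ℤ) (l : List ℤ) (p : ℕ) (hp : p ≤ l.length)
    (ha : a < x) (hl : ∀ y ∈ l, y < x) :
    descCount (a :: l.insertIdx p x) = descCount (a :: l) +
      (if p < l.length then (if l.getD p 0 < (a :: l).getD p 0 then 0 else 1) else 0) := by
  induction l generalizing a p with
  | nil =>
    have : p = 0 := by simpa using hp
    subst this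
    simp [descCount, List.insertIdx_zero]
    all_goals omega
  | cons b t ih =>
    match p with
    | 0 =>
      rw [List.insertIdx_zero]
      simp only [descCount, List.getD_cons_zero, List.length_cons]
      have hb : b < x := hl b (by simp)
      have h1 : ¬ (x < a) := by omega
      have h2 : b < x := hb
      simp only [if_neg h1, if_pos h2, if_pos (Nat.succ_pos t.length)]
      split <;> omega
    | p + 1 =>
      rw [List.insertIdx_succ_cons]
      simp only [descCount, List.length_cons, List.getD_cons_succ, Nat.add_lt_add_iff_right]
      rw [ih b p (by simpa using hp) (hl b (by simp)) (fun y hy => hl y (by simp [hy]))]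
      omega

lemma descCount_insert_small (a x : ℤ) (l : List ℤ) (p : ℕ) (hp : p ≤ l.length)
    (ha : x < a) (hl : ∀ y ∈ l, x < y) :
    descCount (a :: l.insertIdx p x) = descCount (a :: l) +
      (if p < l.length then (if l.getD p 0 < (a :: l).getD p 0 then 0 else 1) else 1) := by
  induction l generalizing a p with
  | nil =>
    have : p = 0 := by simpa using hp
    subst this
    simp [descCount, List.insertIdx_zero, ha]
    all_goals omega
  | cons b t ih =>
    match p with
    | 0 =>
      rw [List.insertIdx_zero]
      simp only [descCount, List.getD_cons_zero, List.length_cons]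
      have hb : x < b := hl b (by simp)
      have h1 : x < a := ha
      simp only [if_pos h1, if_neg (by omega : ¬ b < x), if_pos (Nat.succ_pos t.length)]
      split <;> omega
    | p + 1 =>
      rw [List.insertIdx_succ_cons]
      simp only [descCount, List.length_cons, List.getD_cons_succ, Nat.add_lt_add_iff_right]
      rw [ih b p (by simpa using hp) (hl b (by simp)) (fun y hy => hl y (by simp [hy]))]
      omega



def Good {n : ℕ} (w : Fin n → BSet n) : Prop :=
  (∀ i, (w i).1 ≠ 0) ∧ Function.Injective (fun i => (w i).1.natAbs)

instance {n : ℕ} (w : Fin n → BSet n) : Decidable (Good w) := by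
  unfold Good Function.Injective; infer_instance

def GW (n : ℕ) : Type := {w : Fin n → BSet n // Good w}

noncomputable instance {n : ℕ} : Fintype (GW n) := by
  unfold GW
  infer_instance

def vals {n : ℕ} (w : GW n) : Fin n → ℤ := fun i => (w.1 i).1

def descW {n : ℕ} (w : GW n) : ℕ := descCount ((0 : ℤ) :: List.ofFn (vals w))

def negW {n : ℕ} (w : GW n) : ℕ := (Finset.univ.filter fun i => vals w i < 0).card

def zeroB (n : ℕ) : BSet n := ⟨0, by simp⟩

lemma zeroB_val (n : ℕ) : (zeroB n).1 = 0 := rfl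
lemma negB_val {n : ℕ} (x : BSet n) : (negB x).1 = -x.1 := rfl
lemma posB_val {n : ℕ} (i : Fin n) : (posB i).1 = (i : ℤ) + 1 := rfl

lemma negB_negB {n : ℕ} (x : BSet n) : negB (negB x) = x :=
  Subtype.ext (by simp [negB_val])

lemma bset_bound {n : ℕ} (x : BSet n) : -(n : ℤ) ≤ x.1 ∧ x.1 ≤ (n : ℤ) := by
  have := x.2
  rw [Finset.mem_Icc] at this
  exact this

lemma signed_zero {n : ℕ} {σ : Equiv.Perm (BSet n)} (hσ : IsSigned σ) :
    σ (zeroB n) = zeroB n := by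
  have h := hσ (zeroB n)
  have hz : negB (zeroB n) = zeroB n := Subtype.ext (by simp [negB_val, zeroB_val])
  rw [hz] at h
  exact Subtype.ext (by rw [zeroB_val]; omega)

lemma signed_negB {n : ℕ} {σ : Equiv.Perm (BSet n)} (hσ : IsSigned σ) (x : BSet n) :
    σ (negB x) = negB (σ x) := Subtype.ext (hσ x)

/-- the word of a signed permutation -/
def wordOf {n : ℕ} (σ : Equiv.Perm (BSet n)) (hσ : IsSigned σ) : GW n := by
  refine ⟨fun i => σ (posB i), ?_, ?_⟩
  · intro i h
    have h1 : σ (posB i) = σ (zeroB n) := by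
      rw [signed_zero hσ]; exact Subtype.ext (by rw [zeroB_val]; exact_mod_cast h)
    have h2 := congrArg Subtype.val (σ.injective h1)
    rw [posB_val, zeroB_val] at h2
    omega
  · intro i j h
    simp only [Int.natAbs_eq_natAbs_iff] at h
    rcases h with h | h
    · have h2 := congrArg Subtype.val (σ.injective (Subtype.ext h))
      rw [posB_val, posB_val] at h2
      exact Fin.ext (by omega)
    · have h1 : σ (posB i) = σ (negB (posB j)) := by
        rw [signed_negB hσ]; exact Subtype.ext h
      have h2 := congrArg Subtype.val (σ.injective h1)
      rw [posB_val, negB_val, posB_val] at h2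
      omega

/-- the function of a word -/
def funOf {n : ℕ} (w : GW n) (x : BSet n) : BSet n :=
  if h : 0 < x.1 then w.1 ⟨(x.1 - 1).toNat, by have := bset_bound x; omega⟩
  else if h' : x.1 < 0 then negB (w.1 ⟨(-x.1 - 1).toNat, by have := bset_bound x; omega⟩)
  else zeroB n

lemma val_inj {n : ℕ} (w : GW n) {i j : Fin n} (h : w.1 i = w.1 j) : i = j :=
  w.2.2 (a₁ := i) (a₂ := j) (by
    show (w.1 i).1.natAbs = (w.1 j).1.natAbs
    rw [h])

lemma val_ne_neg {n : ℕ} (w : GW n) (i j : Fin n) : (w.1 i).1 ≠ -((w.1 j).1) := by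
  intro h
  have hij : i = j := w.2.2 (a₁ := i) (a₂ := j) (by
    show (w.1 i).1.natAbs = (w.1 j).1.natAbs
    omega)
  rw [hij] at h
  exact w.2.1 j (by omega)

lemma funOf_inj {n : ℕ} (w : GW n) : Function.Injective (funOf w) := by
  intro x y hxy
  unfold funOf at hxy
  rcases lt_trichotomy x.1 0 with hx | hx | hx <;> rcases lt_trichotomy y.1 0 with hy | hy | hy
  · rw [dif_neg (by omega), dif_pos hx, dif_neg (by omega), dif_pos hy] at hxy
    have h2 := val_inj w (negB_negB _ ▸ negB_negB _ ▸ congrArg negB hxy)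
    simp only [Fin.mk.injEq] at h2
    exact Subtype.ext (by omega)
  · rw [dif_neg (by omega), dif_pos hx, dif_neg (by omega), dif_neg (by omega)] at hxy
    have hv := congrArg Subtype.val hxy
    rw [negB_val, zeroB_val] at hv
    have hnz := w.2.1 (⟨(-x.1 - 1).toNat, by have := bset_bound x; omega⟩ : Fin n)
    exact absurd (by omega) hnz
  · rw [dif_neg (by omega), dif_pos hx, dif_pos hy] at hxy
    have hv := congrArg Subtype.val hxy
    rw [negB_val] at hv
    exact absurd hv.symm (val_ne_neg w _ _)
  · rw [dif_neg (by omega), dif_neg (by omega), dif_neg (by omega), dif_pos hy] at hxy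
    have hv := congrArg Subtype.val hxy
    rw [negB_val, zeroB_val] at hv
    have hnz := w.2.1 (⟨(-y.1 - 1).toNat, by have := bset_bound y; omega⟩ : Fin n)
    exact absurd (by omega) hnz
  · exact Subtype.ext (by omega)
  · rw [dif_neg (by omega), dif_neg (by omega), dif_pos hy] at hxy
    have hv := congrArg Subtype.val hxy
    rw [zeroB_val] at hv
    exact absurd hv.symm (w.2.1 _)
  · rw [dif_pos hx, dif_neg (by omega), dif_pos hy] at hxy
    have hv := congrArg Subtype.val hxy
    rw [negB_val] at hv
    exact absurd hv (val_ne_neg w _ _)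
  · rw [dif_pos hx, dif_neg (by omega), dif_neg (by omega)] at hxy
    have hv := congrArg Subtype.val hxy
    rw [zeroB_val] at hv
    exact absurd hv (w.2.1 _)
  · rw [dif_pos hx, dif_pos hy] at hxy
    have h2 := val_inj w hxy
    simp only [Fin.mk.injEq] at h2
    exact Subtype.ext (by omega)

noncomputable def permOf {n : ℕ} (w : GW n) : Equiv.Perm (BSet n) :=
  Equiv.ofBijective (funOf w) (Finite.injective_iff_bijective.mp (funOf_inj w))

lemma permOf_apply {n : ℕ} (w : GW n) (x : BSet n) : permOf w x = funOf w x := rfl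

lemma permOf_signed {n : ℕ} (w : GW n) : IsSigned (permOf w) := by
  intro x
  rw [permOf_apply, permOf_apply]
  unfold funOf
  rcases lt_trichotomy x.1 0 with h | h | h
  · have h2 : 0 < (negB x).1 := by rw [negB_val]; omega
    rw [dif_pos h2, dif_neg (by omega), dif_pos h]
    simp only [negB_val, neg_neg]
  · have hq : negB x = x := Subtype.ext (by rw [negB_val]; omega)
    rw [hq, dif_neg (by omega), dif_neg (by omega)]
    rw [zeroB_val]
    omega
  · have h1 : ¬ 0 < (negB x).1 := by rw [negB_val]; omega
    have h2 : (negB x).1 < 0 := by rw [negB_val]; omega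
    rw [dif_neg h1, dif_pos h2, dif_pos h]
    simp only [negB_val, neg_neg]

noncomputable def permWordEquiv (n : ℕ) :
    {σ : Equiv.Perm (BSet n) // IsSigned σ} ≃ GW n where
  toFun σ := wordOf σ.1 σ.2
  invFun w := ⟨permOf w, permOf_signed w⟩
  left_inv := by
    rintro ⟨σ, hσ⟩
    refine Subtype.ext (Equiv.ext fun x => ?_)
    show funOf (wordOf σ hσ) x = σ x
    unfold funOf
    rcases lt_trichotomy x.1 0 with h | h | h
    · rw [dif_neg (by omega), dif_pos h]
      show negB (σ (posB ⟨(-x.1 - 1).toNat, _⟩)) = σ x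
      have hp : posB (⟨(-x.1 - 1).toNat, by have := bset_bound x; omega⟩ : Fin n) = negB x :=
        Subtype.ext (show ((-x.1 - 1).toNat : ℤ) + 1 = -x.1 by omega)
      rw [hp, signed_negB hσ, negB_negB]
    · rw [dif_neg (by omega), dif_neg (by omega)]
      rw [show x = zeroB n from Subtype.ext h, signed_zero hσ]
    · rw [dif_pos h]
      show σ (posB ⟨(x.1 - 1).toNat, _⟩) = σ x
      exact congrArg σ (Subtype.ext (show ((x.1 - 1).toNat : ℤ) + 1 = x.1 by omega))
  right_inv := by
    intro w
    apply Subtype.ext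
    funext i
    show funOf w (posB i) = w.1 i
    unfold funOf
    rw [dif_pos (by rw [posB_val]; omega)]
    exact congrArg w.1 (Fin.ext (show ((((i : ℕ) : ℤ) + 1) - 1).toNat = (i : ℕ) by omega))

lemma wordOf_descB {n : ℕ} (σ : Equiv.Perm (BSet n)) (hσ : IsSigned σ) :
    descW (wordOf σ hσ) = descB σ := rfl

lemma wordOf_negCount {n : ℕ} (σ : Equiv.Perm (BSet n)) (hσ : IsSigned σ) :
    negW (wordOf σ hσ) = negCount σ := rfl


/-! ### Insertion -/

def embB {n : ℕ} (x : BSet n) : BSet (n + 1) :=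
  ⟨x.1, by have := bset_bound x; rw [Finset.mem_Icc]; push_cast; omega⟩

def bigB (n : ℕ) (s : Bool) : BSet (n + 1) :=
  ⟨if s then ((n : ℤ) + 1) else -((n : ℤ) + 1), by
    rw [Finset.mem_Icc]; push_cast; split <;> omega⟩

lemma bigB_val (n : ℕ) (s : Bool) :
    (bigB n s).1 = if s then ((n : ℤ) + 1) else -((n : ℤ) + 1) := rfl

lemma bigB_natAbs (n : ℕ) (s : Bool) : (bigB n s).1.natAbs = n + 1 := by
  rw [bigB_val]; split <;> omega

lemma natAbs_le {n : ℕ} (x : BSet n) : x.1.natAbs ≤ n := by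
  have := bset_bound x; omega

def insF {n : ℕ} (w : GW n) (p : Fin (n + 1)) (s : Bool) : Fin (n + 1) → BSet (n + 1) :=
  Fin.insertNth p (bigB n s) (fun i => embB (w.1 i))

lemma insF_same {n : ℕ} (w : GW n) (p : Fin (n + 1)) (s : Bool) :
    insF w p s p = bigB n s := Fin.insertNth_apply_same p _ _

lemma insF_succAbove {n : ℕ} (w : GW n) (p : Fin (n + 1)) (s : Bool) (i : Fin n) :
    insF w p s (p.succAbove i) = embB (w.1 i) := Fin.insertNth_apply_succAbove p _ _ i

lemma insF_good {n : ℕ} (w : GW n) (p : Fin (n + 1)) (s : Bool) : Good (insF w p s) := by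
  constructor
  · intro j
    rcases eq_or_ne j p with rfl | h
    · rw [insF_same, bigB_val]; split <;> omega
    · obtain ⟨i, rfl⟩ := Fin.exists_succAbove_eq h
      rw [insF_succAbove]
      exact w.2.1 i
  · intro j k h
    simp only at h
    rcases eq_or_ne j p with hj | hj
    · rcases eq_or_ne k p with hk | hk
      · rw [hj, hk]
      · exfalso
        obtain ⟨i, hi⟩ := Fin.exists_succAbove_eq hk
        rw [hj, ← hi, insF_same, insF_succAbove] at h
        have h1 := bigB_natAbs n s
        have h2 : ((w.1 i)).1.natAbs ≤ n := natAbs_le (w.1 i)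
        have h4 : (embB (w.1 i)).1 = (w.1 i).1 := rfl
        omega
    · rcases eq_or_ne k p with hk | hk
      · exfalso
        obtain ⟨i, hi⟩ := Fin.exists_succAbove_eq hj
        rw [hk, ← hi, insF_same, insF_succAbove] at h
        have h1 := bigB_natAbs n s
        have h2 : ((w.1 i)).1.natAbs ≤ n := natAbs_le (w.1 i)
        have h4 : (embB (w.1 i)).1 = (w.1 i).1 := rfl
        omega
      · obtain ⟨i, hi⟩ := Fin.exists_succAbove_eq hj
        obtain ⟨i', hi'⟩ := Fin.exists_succAbove_eq hk
        rw [← hi, ← hi', insF_succAbove, insF_succAbove] at h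
        have hii : i = i' := w.2.2 (a₁ := i) (a₂ := i')
          (show ((w.1 i)).1.natAbs = ((w.1 i')).1.natAbs from h)
        rw [← hi, ← hi', hii]

def insW {n : ℕ} (w : GW n) (p : Fin (n + 1)) (s : Bool) : GW (n + 1) :=
  ⟨insF w p s, insF_good w p s⟩

def insMap (n : ℕ) : GW n × Fin (n + 1) × Bool → GW (n + 1) :=
  fun t => insW t.1 t.2.1 t.2.2

lemma insMap_injective (n : ℕ) : Function.Injective (insMap n) := by
  rintro ⟨w, p, s⟩ ⟨w', p', s'⟩ h
  have hf : insF w p s = insF w' p' s' := congrArg Subtype.val h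
  have hpp : p = p' := by
    by_contra hne
    obtain ⟨i, hi⟩ := Fin.exists_succAbove_eq (Ne.symm hne)
    have h1 : insF w p s p' = insF w' p' s' p' := by rw [hf]
    rw [← hi, insF_succAbove, insF_same] at h1
    have h5 := congrArg (fun z : BSet (n + 1) => z.1.natAbs) h1
    rw [bigB_natAbs] at h5
    have h3 : ((w.1 i)).1.natAbs ≤ n := natAbs_le (w.1 i)
    have h4 : (embB (w.1 i)).1 = (w.1 i).1 := rfl
    omega
  subst hpp
  have hval : insF w p s p = insF w' p s' p := by rw [hf]
  rw [insF_same, insF_same] at hval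
  have hss : s = s' := by
    have := congrArg Subtype.val hval
    rw [bigB_val, bigB_val] at this
    cases s <;> cases s' <;> simp_all <;> omega
  subst hss
  have hww : w = w' := by
    apply Subtype.ext
    funext i
    have h1 : insF w p s (p.succAbove i) = insF w' p s (p.succAbove i) := by rw [hf]
    rw [insF_succAbove, insF_succAbove] at h1
    have h2 := congrArg Subtype.val h1
    exact Subtype.ext h2
  rw [hww]

lemma insMap_surjective (n : ℕ) : Function.Surjective (insMap n) := by
  intro u
  have hg : Function.Injective (fun i : Fin (n + 1) =>
      (⟨(u.1 i).1.natAbs - 1, by have := natAbs_le (u.1 i); have := u.2.1 i; omega⟩ :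
        Fin (n + 1))) := by
    intro a b h
    simp only [Fin.mk.injEq] at h
    have ha := u.2.1 a
    have hb := u.2.1 b
    exact u.2.2 (a₁ := a) (a₂ := b) (by show (u.1 a).1.natAbs = (u.1 b).1.natAbs; omega)
  obtain ⟨j, hj⟩ := Finite.injective_iff_surjective.mp hg ⟨n, Nat.lt_succ_self n⟩
  simp only [Fin.mk.injEq] at hj
  have hjabs : (u.1 j).1.natAbs = n + 1 := by have := u.2.1 j; omega
  have hother : ∀ i : Fin n, (u.1 (j.succAbove i)).1.natAbs ≤ n := by
    intro i
    have hle := natAbs_le (u.1 (j.succAbove i))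
    rcases Nat.lt_succ_iff_lt_or_eq.mp (Nat.lt_succ_of_le hle) with h | h
    · omega
    · exfalso
      have : j.succAbove i = j := u.2.2 (a₁ := j.succAbove i) (a₂ := j)
        (by show (u.1 (j.succAbove i)).1.natAbs = (u.1 j).1.natAbs; omega)
      exact Fin.succAbove_ne j i this
  refine ⟨⟨⟨fun i => ⟨(u.1 (j.succAbove i)).1, by
      rw [Finset.mem_Icc]; have := hother i; omega⟩, ?_, ?_⟩, j, decide (0 < (u.1 j).1)⟩, ?_⟩
  · intro i
    exact u.2.1 (j.succAbove i)
  · intro a b h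
    simp only at h
    have : j.succAbove a = j.succAbove b := u.2.2 (a₁ := j.succAbove a) (a₂ := j.succAbove b) h
    exact Fin.succAbove_right_injective this
  · apply Subtype.ext
    funext k
    show insF _ j _ k = u.1 k
    rcases eq_or_ne k j with rfl | hk
    · rw [insF_same]
      apply Subtype.ext
      rw [bigB_val]
      by_cases h0 : 0 < (u.1 k).1
      · rw [if_pos (by simpa using h0)]; omega
      · rw [if_neg (by simpa using h0)]; omega
    · obtain ⟨i, rfl⟩ := Fin.exists_succAbove_eq hk
      rw [insF_succAbove]
      exact Subtype.ext rfl

noncomputable def insEquiv (n : ℕ) : GW n × Fin (n + 1) × Bool ≃ GW (n + 1) :=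
  Equiv.ofBijective (insMap n) ⟨insMap_injective n, insMap_surjective n⟩

lemma insEquiv_apply (n : ℕ) (t : GW n × Fin (n + 1) × Bool) :
    insEquiv n t = insW t.1 t.2.1 t.2.2 := rfl

/-! ### ofFn and insertNth -/

lemma ofFn_cons {α : Type*} {n : ℕ} (x : α) (f : Fin n → α) :
    List.ofFn (Fin.cons x f) = x :: List.ofFn f := by
  rw [List.ofFn_succ]
  simp

lemma ofFn_insertNth {α : Type*} : ∀ {n : ℕ} (p : Fin (n + 1)) (x : α) (f : Fin n → α),
    List.ofFn (Fin.insertNth p x f) = (List.ofFn f).insertIdx p.1 x := by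
  intro n
  induction n with
  | zero =>
    intro p x f
    have hp : p = 0 := Fin.ext (by omega)
    subst hp
    rw [Fin.insertNth_zero']
    rw [ofFn_cons]
    simp [List.insertIdx_zero]
  | succ m ih =>
    intro p x f
    cases p using Fin.cases with
    | zero =>
      rw [Fin.insertNth_zero']
      rw [ofFn_cons]
      simp [List.insertIdx_zero]
    | succ q =>
      have key : Fin.insertNth q.succ x f = Fin.cons (α := fun _ => α) (f 0) (Fin.insertNth (α := fun _ => α) q x (Fin.tail f)) := by
        funext j
        cases j using Fin.cases with
        | zero =>
          rw [Fin.cons_zero]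
          have h0 : (q.succ).succAbove 0 = 0 := by
            rw [Fin.succAbove_of_castSucc_lt]
            · simp
            · simp [Fin.lt_def]
          conv_lhs => rw [← h0]
          rw [Fin.insertNth_apply_succAbove]
        | succ k =>
          rw [Fin.cons_succ]
          rcases eq_or_ne k q with rfl | hk
          · rw [Fin.insertNth_apply_same, Fin.insertNth_apply_same]
          · obtain ⟨m', hm'⟩ := Fin.exists_succAbove_eq hk
            rw [← hm']
            rw [show (q.succAbove m').succ = q.succ.succAbove m'.succ from
              (Fin.succ_succAbove_succ q m').symm]
            rw [Fin.insertNth_apply_succAbove, Fin.insertNth_apply_succAbove]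
            rfl
      rw [key, ofFn_cons, ih q x (Fin.tail f)]
      conv_rhs => rw [List.ofFn_succ]
      rw [show (q.succ.1 : ℕ) = q.1 + 1 from rfl, List.insertIdx_succ_cons]
      rfl

/-! ### statistics under insertion -/

def slotInc {n : ℕ} (w : GW n) (p : Fin (n + 1)) (s : Bool) : ℕ :=
  if p.1 < n then
    (if (List.ofFn (vals w)).getD p.1 0 < (((0 : ℤ) :: List.ofFn (vals w))).getD p.1 0
      then 0 else 1)
  else (if s then 0 else 1)

lemma vals_insW {n : ℕ} (w : GW n) (p : Fin (n + 1)) (s : Bool) :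
    vals (insW w p s) = Fin.insertNth p ((bigB n s).1) (vals w) := by
  funext j
  rcases eq_or_ne j p with rfl | hj
  · rw [Fin.insertNth_apply_same]
    exact congrArg Subtype.val (insF_same w j s)
  · obtain ⟨i, rfl⟩ := Fin.exists_succAbove_eq hj
    rw [Fin.insertNth_apply_succAbove]
    exact congrArg Subtype.val (insF_succAbove w p s i)

lemma vals_bound {n : ℕ} (w : GW n) (i : Fin n) : -(n : ℤ) ≤ vals w i ∧ vals w i ≤ (n : ℤ) :=
  bset_bound (w.1 i)

lemma descW_insW {n : ℕ} (w : GW n) (p : Fin (n + 1)) (s : Bool) :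
    descW (insW w p s) = descW w + slotInc w p s := by
  unfold descW slotInc
  rw [vals_insW, ofFn_insertNth]
  have hlen : (List.ofFn (vals w)).length = n := List.length_ofFn
  have hmem : ∀ y ∈ List.ofFn (vals w), -(n : ℤ) ≤ y ∧ y ≤ (n : ℤ) := by
    intro y hy
    rw [List.mem_ofFn] at hy
    obtain ⟨i, rfl⟩ := hy
    exact vals_bound w i
  have hp : p.1 ≤ (List.ofFn (vals w)).length := by rw [hlen]; exact Nat.lt_succ_iff.mp p.2
  cases s
  · rw [show (bigB n false).1 = -((n : ℤ) + 1) from rfl]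
    rw [descCount_insert_small 0 (-((n : ℤ) + 1)) _ _ hp (by omega)
      (fun y hy => by have := hmem y hy; omega)]
    rw [hlen]
    simp only [Bool.false_eq_true, if_false]
  · rw [show (bigB n true).1 = ((n : ℤ) + 1) from rfl]
    rw [descCount_insert_big 0 ((n : ℤ) + 1) _ _ hp (by omega)
      (fun y hy => by have := hmem y hy; omega)]
    rw [hlen]
    simp only [if_true]

lemma negW_insW {n : ℕ} (w : GW n) (p : Fin (n + 1)) (s : Bool) :
    negW (insW w p s) = (if s then 0 else 1) + negW w := by
  unfold negW
  rw [Finset.card_filter, Finset.card_filter, Fin.sum_univ_succAbove _ p]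
  have h1 : vals (insW w p s) p = (bigB n s).1 := congrArg Subtype.val (insF_same w p s)
  have h2 : ∀ i, vals (insW w p s) (p.succAbove i) = vals w i :=
    fun i => congrArg Subtype.val (insF_succAbove w p s i)
  rw [h1]
  simp only [h2]
  congr 1
  cases s
  · rw [bigB_val]
    simp only [Bool.false_eq_true, if_false]
    rw [if_pos (by omega)]
  · rw [bigB_val]
    simp only [if_true]
    rw [if_neg (by omega)]

lemma descW_le {n : ℕ} (w : GW n) : descW w ≤ n := by
  have h := descCount_cons_le 0 (List.ofFn (vals w))
  rw [List.length_ofFn] at h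
  exact h

lemma descW_eq_sum {n : ℕ} (w : GW n) :
    descW w = ∑ i ∈ Finset.range n,
      if (List.ofFn (vals w)).getD i 0 < (((0 : ℤ) :: List.ofFn (vals w))).getD i 0
        then 1 else 0 := by
  have h := descCount_cons_eq_sum 0 (List.ofFn (vals w))
  rw [List.length_ofFn] at h
  exact h

/-! ### genChoose algebra -/

lemma genChoose_zero (y : ℝ) : genChoose y 0 = 1 := by simp [genChoose]

lemma genChoose_succ (y : ℝ) (n : ℕ) :
    genChoose y (n + 1) = genChoose y n * (y - n) / (n + 1) := by
  unfold genChoose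
  rw [Finset.prod_range_succ, Nat.factorial_succ]
  have h1 : ((n:ℕ).factorial : ℝ) ≠ 0 := Nat.cast_ne_zero.mpr (Nat.factorial_ne_zero n)
  have h2 : ((n : ℝ) + 1) ≠ 0 := by positivity
  push_cast
  rw [div_mul_eq_mul_div, div_div, mul_comm ((n.factorial : ℝ)) ((n : ℝ) + 1)]

lemma genChoose_succ' (y : ℝ) (n : ℕ) :
    genChoose (y + 1) (n + 1) = genChoose y n * (y + 1) / (n + 1) := by
  unfold genChoose
  rw [Finset.prod_range_succ', Nat.factorial_succ]
  have h3 : ∏ i ∈ Finset.range n, (y + 1 - ((i : ℝ) + 1)) = ∏ i ∈ Finset.range n, (y - i) :=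
    Finset.prod_congr rfl (fun i _ => by ring)
  have h1 : ((n:ℕ).factorial : ℝ) ≠ 0 := Nat.cast_ne_zero.mpr (Nat.factorial_ne_zero n)
  have h2 : ((n : ℝ) + 1) ≠ 0 := by positivity
  push_cast
  rw [h3]
  rw [div_mul_eq_mul_div, div_div, mul_comm ((n.factorial : ℝ)) ((n : ℝ) + 1)]
  ring_nf

lemma keyU (n : ℕ) (x D : ℝ) :
    (2*D+1) * genChoose (x+D) (n+1) + (2*(n:ℝ) - 2*D + 1) * genChoose (x+D+1) (n+1)
      = (2*x+1) * genChoose (x+D) n := by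
  rw [genChoose_succ (x+D) n, genChoose_succ' (x+D) n]
  have h2 : ((n : ℝ) + 1) ≠ 0 := by positivity
  field_simp
  ring

lemma keyV (n : ℕ) (x D : ℝ) :
    genChoose (x+D) (n+1) - genChoose (x+D+1) (n+1) = -genChoose (x+D) n := by
  rw [genChoose_succ (x+D) n, genChoose_succ' (x+D) n]
  have h2 : ((n : ℝ) + 1) ≠ 0 := by positivity
  field_simp
  ring

/-! ### slot sums -/

lemma slotInc_castSucc {n : ℕ} (w : GW n) (q : Fin n) (s : Bool) :
    slotInc w q.castSucc s =
      if (List.ofFn (vals w)).getD q.1 0 < (((0 : ℤ) :: List.ofFn (vals w))).getD q.1 0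
        then 0 else 1 := by
  unfold slotInc
  rw [if_pos]
  · rfl
  · exact q.2

lemma slotInc_last {n : ℕ} (w : GW n) (s : Bool) :
    slotInc w (Fin.last n) s = if s then 0 else 1 := by
  unfold slotInc
  rw [if_neg]
  simp [Fin.last]

lemma card_descSlots {n : ℕ} (w : GW n) :
    ((Finset.range n).filter (fun i =>
      (List.ofFn (vals w)).getD i 0 < (((0 : ℤ) :: List.ofFn (vals w))).getD i 0)).card
      = descW w := by
  rw [Finset.card_filter, descW_eq_sum]

lemma sum_ite_cost {n : ℕ} (w : GW n) (c0 c1 : ℝ) :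
    ∑ i ∈ Finset.range n, (if (List.ofFn (vals w)).getD i 0 <
        (((0 : ℤ) :: List.ofFn (vals w))).getD i 0 then c0 else c1)
      = (descW w : ℝ) * c0 + ((n : ℝ) - descW w) * c1 := by
  rw [Finset.sum_ite, Finset.sum_const, Finset.sum_const, card_descSlots]
  have hcard := Finset.card_filter_add_card_filter_not (s := Finset.range n)
    (p := fun i => (List.ofFn (vals w)).getD i 0 < (((0 : ℤ) :: List.ofFn (vals w))).getD i 0)
  rw [card_descSlots] at hcard
  rw [Finset.card_range] at hcard
  have hd : descW w ≤ n := by omega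
  have : (Finset.filter (fun i => ¬ (List.ofFn (vals w)).getD i 0 <
      (((0 : ℤ) :: List.ofFn (vals w))).getD i 0) (Finset.range n)).card = n - descW w := by omega
  rw [this]
  rw [nsmul_eq_mul, nsmul_eq_mul]
  rw [Nat.cast_sub hd]

lemma sum_slotInc {n : ℕ} (w : GW n) (g : ℕ → ℝ) (s : Bool) :
    ∑ p : Fin (n + 1), g (slotInc w p s) =
      ((descW w : ℝ) + if s then 1 else 0) * g 0
        + ((n : ℝ) - descW w + if s then 0 else 1) * g 1 := by
  rw [Fin.sum_univ_castSucc]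
  have h1 : ∀ q : Fin n, g (slotInc w q.castSucc s) =
      (fun i => if (List.ofFn (vals w)).getD i 0 <
        (((0 : ℤ) :: List.ofFn (vals w))).getD i 0 then g 0 else g 1) q.1 := by
    intro q
    rw [slotInc_castSucc, apply_ite g]
  rw [Finset.sum_congr rfl (fun q _ => h1 q)]
  rw [Fin.sum_univ_eq_sum_range (fun i => if (List.ofFn (vals w)).getD i 0 <
        (((0 : ℤ) :: List.ofFn (vals w))).getD i 0 then g 0 else g 1) n]
  rw [sum_ite_cost w (g 0) (g 1), slotInc_last]
  cases s
  · simp only [Bool.false_eq_true, if_false]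
    ring
  · simp only [if_true]
    ring

/-! ### base case -/

instance : Unique (GW 0) where
  default := ⟨fun i => i.elim0, fun i => i.elim0, fun {a b} _ => a.elim0⟩
  uniq := fun w => Subtype.ext (funext fun i => i.elim0)

lemma descW_zero (w : GW 0) : descW w = 0 := by
  unfold descW
  rw [List.ofFn_zero]
  rfl

lemma negW_zero (w : GW 0) : negW w = 0 := by
  unfold negW
  simp

/-! ### the two main sums -/

lemma sumU : ∀ (n : ℕ) (x : ℝ),
    ∑ w : GW n, genChoose (x + descW w) n = (2*x+1)^n := by
  intro n
  induction n with
  | zero =>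
    intro x
    rw [Fintype.sum_unique]
    rw [descW_zero]
    norm_num [genChoose_zero]
  | succ m ih =>
    intro x
    rw [← Equiv.sum_comp (insEquiv m) (fun u => genChoose (x + descW u) (m+1))]
    rw [Fintype.sum_prod_type]
    have hstep : ∀ w : GW m, ∑ q : Fin (m+1) × Bool,
        genChoose (x + descW (insEquiv m (w, q))) (m+1)
          = (2*x+1) * genChoose (x + descW w) m := by
      intro w
      rw [Fintype.sum_prod_type]
      have h1 : ∀ (p : Fin (m+1)) (s : Bool),
          genChoose (x + descW (insEquiv m (w, (p, s)))) (m+1)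
            = (fun k : ℕ => genChoose (x + (descW w : ℝ) + k) (m+1)) (slotInc w p s) := by
        intro p s
        rw [insEquiv_apply]
        simp only
        rw [descW_insW]
        push_cast
        ring_nf
      rw [Finset.sum_congr rfl (fun p _ => Finset.sum_congr rfl (fun s _ => h1 p s))]
      rw [Finset.sum_comm]
      rw [Fintype.sum_bool]
      rw [sum_slotInc w (fun k : ℕ => genChoose (x + (descW w : ℝ) + k) (m+1)) true]
      rw [sum_slotInc w (fun k : ℕ => genChoose (x + (descW w : ℝ) + k) (m+1)) false]
      have hg0 : (fun k : ℕ => genChoose (x + (descW w : ℝ) + k) (m+1)) 0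
          = genChoose (x + (descW w : ℝ)) (m+1) := by norm_num
      have hg1 : (fun k : ℕ => genChoose (x + (descW w : ℝ) + k) (m+1)) 1
          = genChoose (x + (descW w : ℝ) + 1) (m+1) := by norm_num
      simp only [Nat.cast_zero, Nat.cast_one, add_zero]
      rw [← keyU m x (descW w : ℝ)]
      simp only [if_true, if_false, Bool.false_eq_true]
      ring
    rw [Finset.sum_congr rfl (fun w _ => hstep w)]
    rw [← Finset.mul_sum, ih x, pow_succ]
    ring

lemma sumV : ∀ (n : ℕ) (x : ℝ),
    ∑ w : GW n, (-1:ℝ)^(negW w) * genChoose (x + descW w) n = (-1)^n := by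
  intro n
  induction n with
  | zero =>
    intro x
    rw [Fintype.sum_unique]
    rw [descW_zero, negW_zero]
    norm_num [genChoose_zero]
  | succ m ih =>
    intro x
    rw [← Equiv.sum_comp (insEquiv m)
      (fun u => (-1:ℝ)^(negW u) * genChoose (x + descW u) (m+1))]
    rw [Fintype.sum_prod_type]
    have hstep : ∀ w : GW m, ∑ q : Fin (m+1) × Bool,
        (-1:ℝ)^(negW (insEquiv m (w, q))) * genChoose (x + descW (insEquiv m (w, q))) (m+1)
          = (-1:ℝ)^(negW w) * (-(genChoose (x + descW w) m)) := by
      intro w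
      rw [Fintype.sum_prod_type]
      have h1 : ∀ (p : Fin (m+1)) (s : Bool),
          (-1:ℝ)^(negW (insEquiv m (w, (p, s))))
              * genChoose (x + descW (insEquiv m (w, (p, s)))) (m+1)
            = (-1:ℝ)^(negW w) * ((if s then (1:ℝ) else -1) *
                (fun k : ℕ => genChoose (x + (descW w : ℝ) + k) (m+1)) (slotInc w p s)) := by
        intro p s
        rw [insEquiv_apply]
        simp only
        rw [descW_insW, negW_insW]
        cases s
        · simp only [Bool.false_eq_true, if_false]
          rw [pow_add, pow_one]
          push_cast
          ring_nf
        · simp only [if_true]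
          rw [zero_add]
          push_cast
          ring_nf
      rw [Finset.sum_congr rfl (fun p _ => Finset.sum_congr rfl (fun s _ => h1 p s))]
      have h2 : ∀ p : Fin (m+1), ∑ s : Bool, (-1:ℝ)^(negW w) * ((if s then (1:ℝ) else -1) *
          (fun k : ℕ => genChoose (x + (descW w : ℝ) + k) (m+1)) (slotInc w p s))
            = (-1:ℝ)^(negW w) *
              ((fun k : ℕ => genChoose (x + (descW w : ℝ) + k) (m+1)) (slotInc w p true)
               - (fun k : ℕ => genChoose (x + (descW w : ℝ) + k) (m+1)) (slotInc w p false)) := by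
        intro p
        rw [Fintype.sum_bool]
        simp only [if_true, if_false, Bool.false_eq_true]
        ring
      rw [Finset.sum_congr rfl (fun p _ => h2 p)]
      rw [← Finset.mul_sum]
      rw [Finset.sum_sub_distrib]
      rw [sum_slotInc w (fun k : ℕ => genChoose (x + (descW w : ℝ) + k) (m+1)) true]
      rw [sum_slotInc w (fun k : ℕ => genChoose (x + (descW w : ℝ) + k) (m+1)) false]
      have hg0 : (fun k : ℕ => genChoose (x + (descW w : ℝ) + k) (m+1)) 0
          = genChoose (x + (descW w : ℝ)) (m+1) := by norm_num
      have hg1 : (fun k : ℕ => genChoose (x + (descW w : ℝ) + k) (m+1)) 1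
          = genChoose (x + (descW w : ℝ) + 1) (m+1) := by norm_num
      simp only [Nat.cast_zero, Nat.cast_one, add_zero]
      have hkey := keyV m x (descW w : ℝ)
      simp only [if_true, if_false, Bool.false_eq_true]
      have : genChoose (x + (descW w:ℝ)) (m+1) - genChoose (x + (descW w:ℝ) + 1) (m+1)
          = -genChoose (x + (descW w:ℝ)) m := hkey
      congr 1
      linarith [this]
    rw [Finset.sum_congr rfl (fun w _ => hstep w)]
    have : ∑ w : GW m, (-1:ℝ)^(negW w) * (-(genChoose (x + descW w) m))
        = -∑ w : GW m, (-1:ℝ)^(negW w) * genChoose (x + descW w) m := by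
      rw [← Finset.sum_neg_distrib]
      apply Finset.sum_congr rfl
      intros
      ring
    rw [this, ih x, pow_succ]
    ring

/-! ### cardinality transfer -/

lemma eulerianD_eq_card (n k : ℕ) [inst : DecidablePred fun w : GW n => Even (negW w) ∧ descW w = k] :
    eulerianD n k = (Finset.univ.filter fun w : GW n => Even (negW w) ∧ descW w = k).card := by
  classical
  rw [eulerianD, ← Fintype.card_subtype]
  apply Fintype.card_congr
  have e0 : {σ : Equiv.Perm (BSet n) // (IsSigned σ ∧ Even (negCount σ)) ∧ descB σ = k} ≃
      {s : {σ : Equiv.Perm (BSet n) // IsSigned σ} // Even (negCount s.1) ∧ descB s.1 = k} :=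
    { toFun := fun t => ⟨⟨t.1, t.2.1.1⟩, t.2.1.2, t.2.2⟩
      invFun := fun t => ⟨t.1.1, ⟨t.1.2, t.2.1⟩, t.2.2⟩
      left_inv := fun _ => rfl
      right_inv := fun _ => rfl }
  have e1 : {s : {σ : Equiv.Perm (BSet n) // IsSigned σ} // Even (negCount s.1) ∧ descB s.1 = k} ≃
      {w : GW n // Even (negW w) ∧ descW w = k} :=
    (permWordEquiv n).subtypeEquiv (fun s => by obtain ⟨σ, hσ⟩ := s; exact Iff.rfl)
  exact e0.trans e1

end AuxD


open AuxD

theorem stmt12 (n : ℕ) (x : ℝ) :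
    2 * ∑ k ∈ Finset.range (n + 1), genChoose (x + k) n * (eulerianD n k : ℝ)
      = (2 * x + 1) ^ n + (-1) ^ n := by
  classical
  have hgroup : ∑ k ∈ Finset.range (n + 1), genChoose (x + k) n * (eulerianD n k : ℝ)
      = ∑ w ∈ Finset.univ.filter (fun w : GW n => Even (negW w)),
          genChoose (x + descW w) n := by
    rw [← Finset.sum_fiberwise_of_maps_to (g := descW)
      (t := Finset.range (n + 1))
      (fun w _ => Finset.mem_range.mpr (Nat.lt_succ_of_le (descW_le w)))
      (fun w => genChoose (x + descW w) n)]
    apply Finset.sum_congr rfl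
    intro k _
    rw [Finset.filter_filter]
    have hconst : ∀ w ∈ Finset.univ.filter (fun w : GW n => Even (negW w) ∧ descW w = k),
        genChoose (x + descW w) n = genChoose (x + k) n := by
      intro w hw
      rw [Finset.mem_filter] at hw
      rw [hw.2.2]
    rw [Finset.sum_congr rfl hconst, Finset.sum_const, nsmul_eq_mul,
      eulerianD_eq_card n k, mul_comm]
  rw [hgroup]
  have hU := sumU n x
  have hV := sumV n x
  have hsplit : ∑ w : GW n, (1 + (-1:ℝ)^(negW w)) * genChoose (x + descW w) n
      = 2 * ∑ w ∈ Finset.univ.filter (fun w : GW n => Even (negW w)),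
          genChoose (x + descW w) n := by
    rw [← Finset.sum_filter_add_sum_filter_not Finset.univ
      (fun w : GW n => Even (negW w))
      (fun w => (1 + (-1:ℝ)^(negW w)) * genChoose (x + descW w) n)]
    have h1 : ∀ w ∈ Finset.univ.filter (fun w : GW n => Even (negW w)),
        (1 + (-1:ℝ)^(negW w)) * genChoose (x + descW w) n
          = 2 * genChoose (x + descW w) n := by
      intro w hw
      rw [Finset.mem_filter] at hw
      rw [hw.2.neg_one_pow]
      norm_num
    have h2 : ∀ w ∈ Finset.univ.filter (fun w : GW n => ¬ Even (negW w)),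
        (1 + (-1:ℝ)^(negW w)) * genChoose (x + descW w) n = 0 := by
      intro w hw
      rw [Finset.mem_filter] at hw
      rw [(Nat.not_even_iff_odd.mp hw.2).neg_one_pow]
      ring
    rw [Finset.sum_congr rfl h1, Finset.sum_congr rfl h2, Finset.sum_const_zero, add_zero,
      Finset.mul_sum]
  rw [← hsplit]
  have hcomb : ∑ w : GW n, (1 + (-1:ℝ)^(negW w)) * genChoose (x + descW w) n
      = (∑ w : GW n, genChoose (x + descW w) n)
        + ∑ w : GW n, (-1:ℝ)^(negW w) * genChoose (x + descW w) n := by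
    rw [← Finset.sum_add_distrib]
    apply Finset.sum_congr rfl
    intros
    ring
  rw [hcomb, hU, hV]
end
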